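/- arXiv:2306.08806 — 3 statements merged into one kernel-verified Lean document; each statement's English description precedes it below -/
import Mathlib

section
/- Let d ≥ 1 be an integer and σ > d/2, and let Φ : ℝ^d → ℝ be a continuous integrable function whose Fourier transform satisfies c₁(1+‖ω‖₂²)^{-σ} ≤ Φ̂(ω) ≤ c₂(1+‖ω‖₂²)^{-σ} for all ω ∈ ℝ^d, for constants 0 < c₁ ≤ c₂. Then for every δ ∈ (0,1] and every integrable and square-integrable f : ℝ^d → ℂ, the norm equivalence √c₁ ‖f‖_{Φ_δ} ≤ ‖f‖_{W^{σ,2}(ℝ^d)} ≤ √c₂ δ^{-σ} ‖f‖_{Φ_δ} holds (as inequalities of possibly infinite quantities). -/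
open MeasureTheory ENNReal
open scoped RealInnerProductSpace

/-- The Fourier transform `û(ω) = (2π)^{-d/2} ∫ u(x) e^{-i x·ω} dx`. -/
noncomputable def ftrans {d : ℕ} (f : EuclideanSpace ℝ (Fin d) → ℂ)
    (ω : EuclideanSpace ℝ (Fin d)) : ℂ :=
  (((2 * Real.pi) ^ (-(d : ℝ) / 2) : ℝ) : ℂ) *
    ∫ x, Complex.exp (-(Complex.I * ((inner ℝ x ω : ℝ) : ℂ))) * f x

theorem stmt3 (d : ℕ) (hd : 1 ≤ d) (σ : ℝ) (hσ : (d : ℝ) / 2 < σ)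
    (c₁ c₂ : ℝ) (hc₁ : 0 < c₁) (hc₁₂ : c₁ ≤ c₂)
    (Φ : EuclideanSpace ℝ (Fin d) → ℝ) (hΦc : Continuous Φ)
    (hΦi : Integrable (fun x => (Φ x : ℂ)))
    (Φhat : EuclideanSpace ℝ (Fin d) → ℝ)
    (hΦhat : ∀ ω, ftrans (fun x => (Φ x : ℂ)) ω = ((Φhat ω : ℝ) : ℂ))
    (hlow : ∀ ω, c₁ * (1 + ‖ω‖ ^ 2) ^ (-σ) ≤ Φhat ω)
    (hup : ∀ ω, Φhat ω ≤ c₂ * (1 + ‖ω‖ ^ 2) ^ (-σ)) :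
    ∀ δ : ℝ, 0 < δ → δ ≤ 1 →
      ∀ f : EuclideanSpace ℝ (Fin d) → ℂ, Integrable f → MemLp f 2 →
        (ENNReal.ofReal (Real.sqrt c₁) *
            (∫⁻ ω, (‖ftrans f ω‖₊ : ℝ≥0∞) ^ 2 / ENNReal.ofReal (Φhat (δ • ω))) ^ (1/2 : ℝ)
          ≤ (∫⁻ ω, (‖ftrans f ω‖₊ : ℝ≥0∞) ^ 2
              * ENNReal.ofReal ((1 + ‖ω‖ ^ 2) ^ σ)) ^ (1/2 : ℝ)) ∧
        ((∫⁻ ω, (‖ftrans f ω‖₊ : ℝ≥0∞) ^ 2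
              * ENNReal.ofReal ((1 + ‖ω‖ ^ 2) ^ σ)) ^ (1/2 : ℝ)
          ≤ ENNReal.ofReal (Real.sqrt c₂ * δ ^ (-σ)) *
            (∫⁻ ω, (‖ftrans f ω‖₊ : ℝ≥0∞) ^ 2 / ENNReal.ofReal (Φhat (δ • ω))) ^ (1/2 : ℝ)) := by
  intro δ hδ hδ1 f _ _
  have hσ0 : 0 < σ := lt_of_le_of_lt (by positivity) hσ
  have hc₂ : 0 < c₂ := hc₁.trans_le hc₁₂
  have hnorm : ∀ ω : EuclideanSpace ℝ (Fin d), ‖δ • ω‖ ^ 2 = δ ^ 2 * ‖ω‖ ^ 2 := by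
    intro ω; rw [norm_smul, Real.norm_eq_abs, abs_of_pos hδ]; ring
  have hpos : ∀ ω : EuclideanSpace ℝ (Fin d), (0:ℝ) < 1 + ‖ω‖ ^ 2 := fun ω => by positivity
  have ht : ∀ ω : EuclideanSpace ℝ (Fin d), 0 < Φhat (δ • ω) := by
    intro ω
    have h : (0:ℝ) < c₁ * (1 + ‖δ • ω‖ ^ 2) ^ (-σ) := by positivity
    linarith [hlow (δ • ω)]
  have hab : ∀ ω : EuclideanSpace ℝ (Fin d),
      (1 + ‖δ • ω‖ ^ 2) ^ σ * (1 + ‖δ • ω‖ ^ 2) ^ (-σ) = 1 := by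
    intro ω; rw [← Real.rpow_add (hpos _)]; simp
  have hmono : ∀ ω : EuclideanSpace ℝ (Fin d),
      (1 + ‖δ • ω‖ ^ 2) ^ σ ≤ (1 + ‖ω‖ ^ 2) ^ σ := by
    intro ω
    apply Real.rpow_le_rpow (by positivity) _ hσ0.le
    rw [hnorm]
    have hδ2le : δ ^ 2 ≤ 1 := by nlinarith
    nlinarith [mul_le_mul_of_nonneg_right hδ2le (sq_nonneg ‖ω‖)]
  -- claim 1 (real)
  have claim1 : ∀ ω : EuclideanSpace ℝ (Fin d),
      (Φhat (δ • ω))⁻¹ * c₁ ≤ (1 + ‖ω‖ ^ 2) ^ σ := by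
    intro ω
    rw [inv_mul_le_iff₀ (ht ω)]
    have h1 := hlow (δ • ω)
    have h2 := hmono ω
    have h3 := hab ω
    have h4 : (0:ℝ) < (1 + ‖δ • ω‖ ^ 2) ^ σ := by positivity
    have h5 : (0:ℝ) < (1 + ‖δ • ω‖ ^ 2) ^ (-σ) := by positivity
    nlinarith [ht ω]
  -- scaling fact
  have hδ2 : (0:ℝ) < δ ^ 2 := by positivity
  have hδ2le : δ ^ 2 ≤ 1 := by nlinarith
  have hkc : (δ ^ 2)⁻¹ * δ ^ 2 = 1 := inv_mul_cancel₀ (ne_of_gt hδ2)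
  have hk1 : (1:ℝ) ≤ (δ ^ 2)⁻¹ := by
    have := inv_pos.mpr hδ2
    nlinarith
  have hscale : ∀ ω : EuclideanSpace ℝ (Fin d),
      (1 + ‖ω‖ ^ 2) ^ σ ≤ (δ ^ (-σ)) ^ 2 * (1 + ‖δ • ω‖ ^ 2) ^ σ := by
    intro ω
    have e1 : (δ ^ (-σ)) ^ 2 = ((δ ^ 2)⁻¹) ^ σ := by
      have h2 : ((δ ^ 2)⁻¹ : ℝ) = δ ^ (-2 : ℝ) := by
        rw [← Real.rpow_natCast δ 2, ← Real.rpow_neg hδ.le]; norm_num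
      rw [← Real.rpow_natCast (δ ^ (-σ)) 2, ← Real.rpow_mul hδ.le, h2,
        ← Real.rpow_mul hδ.le]
      congr 1; ring
    calc (1 + ‖ω‖ ^ 2) ^ σ
        ≤ ((δ ^ 2)⁻¹ * (1 + ‖δ • ω‖ ^ 2)) ^ σ := by
          apply Real.rpow_le_rpow (hpos ω).le _ hσ0.le
          rw [hnorm]
          nlinarith [sq_nonneg ‖ω‖]
      _ = ((δ ^ 2)⁻¹) ^ σ * (1 + ‖δ • ω‖ ^ 2) ^ σ :=
          Real.mul_rpow (by positivity) (hpos _).le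
      _ = (δ ^ (-σ)) ^ 2 * (1 + ‖δ • ω‖ ^ 2) ^ σ := by rw [e1]
  -- claim 2 (real)
  have claim2 : ∀ ω : EuclideanSpace ℝ (Fin d),
      (1 + ‖ω‖ ^ 2) ^ σ ≤ (c₂ * (δ ^ (-σ)) ^ 2) * (Φhat (δ • ω))⁻¹ := by
    intro ω
    rw [← div_eq_mul_inv, le_div_iff₀ (ht ω)]
    have h1 := hup (δ • ω)
    have h2 := hscale ω
    have h3 := hab ω
    have h4 : (0:ℝ) < (1 + ‖δ • ω‖ ^ 2) ^ σ := by positivity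
    have h5 : (0:ℝ) < (1 + ‖δ • ω‖ ^ 2) ^ (-σ) := by positivity
    have h6 : (0:ℝ) < δ ^ (-σ) := Real.rpow_pos_of_pos hδ _
    have h7 := mul_le_mul h2 h1 (ht ω).le (by positivity)
    have h8 : (δ ^ (-σ)) ^ 2 * (1 + ‖δ • ω‖ ^ 2) ^ σ * (c₂ * (1 + ‖δ • ω‖ ^ 2) ^ (-σ))
        = c₂ * (δ ^ (-σ)) ^ 2 := by linear_combination (c₂ * (δ ^ (-σ)) ^ 2) * h3
    linarith
  -- pointwise ENNReal inequalities
  have key1 : ∀ ω : EuclideanSpace ℝ (Fin d),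
      ENNReal.ofReal c₁ * ((‖ftrans f ω‖₊ : ℝ≥0∞) ^ 2 / ENNReal.ofReal (Φhat (δ • ω)))
        ≤ (‖ftrans f ω‖₊ : ℝ≥0∞) ^ 2 * ENNReal.ofReal ((1 + ‖ω‖ ^ 2) ^ σ) := by
    intro ω
    rw [div_eq_mul_inv, ← ENNReal.ofReal_inv_of_pos (ht ω)]
    have : ENNReal.ofReal c₁ *
        ((‖ftrans f ω‖₊ : ℝ≥0∞) ^ 2 * ENNReal.ofReal (Φhat (δ • ω))⁻¹)
        = (‖ftrans f ω‖₊ : ℝ≥0∞) ^ 2 * ENNReal.ofReal ((Φhat (δ • ω))⁻¹ * c₁) := by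
      rw [ENNReal.ofReal_mul (inv_nonneg.mpr (ht ω).le)]; ring
    rw [this]
    exact mul_le_mul_right (ENNReal.ofReal_le_ofReal (claim1 ω)) _
  have key2 : ∀ ω : EuclideanSpace ℝ (Fin d),
      (‖ftrans f ω‖₊ : ℝ≥0∞) ^ 2 * ENNReal.ofReal ((1 + ‖ω‖ ^ 2) ^ σ)
        ≤ ENNReal.ofReal (c₂ * (δ ^ (-σ)) ^ 2) *
          ((‖ftrans f ω‖₊ : ℝ≥0∞) ^ 2 / ENNReal.ofReal (Φhat (δ • ω))) := by
    intro ω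
    rw [div_eq_mul_inv, ← ENNReal.ofReal_inv_of_pos (ht ω)]
    have hCnn : (0:ℝ) ≤ c₂ * (δ ^ (-σ)) ^ 2 := mul_nonneg hc₂.le (sq_nonneg _)
    have heq : ENNReal.ofReal (c₂ * (δ ^ (-σ)) ^ 2) *
        ((‖ftrans f ω‖₊ : ℝ≥0∞) ^ 2 * ENNReal.ofReal (Φhat (δ • ω))⁻¹)
        = (‖ftrans f ω‖₊ : ℝ≥0∞) ^ 2 *
          ENNReal.ofReal ((c₂ * (δ ^ (-σ)) ^ 2) * (Φhat (δ • ω))⁻¹) := by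
      rw [ENNReal.ofReal_mul hCnn]; ring
    rw [heq]
    exact mul_le_mul_right (ENNReal.ofReal_le_ofReal (claim2 ω)) _
  -- integrate
  have I1 : ENNReal.ofReal c₁ *
      ∫⁻ ω, (‖ftrans f ω‖₊ : ℝ≥0∞) ^ 2 / ENNReal.ofReal (Φhat (δ • ω))
      ≤ ∫⁻ ω, (‖ftrans f ω‖₊ : ℝ≥0∞) ^ 2 * ENNReal.ofReal ((1 + ‖ω‖ ^ 2) ^ σ) := by
    rw [← lintegral_const_mul' _ _ ENNReal.ofReal_ne_top]
    exact lintegral_mono key1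
  have I2 : (∫⁻ ω, (‖ftrans f ω‖₊ : ℝ≥0∞) ^ 2 * ENNReal.ofReal ((1 + ‖ω‖ ^ 2) ^ σ))
      ≤ ENNReal.ofReal (c₂ * (δ ^ (-σ)) ^ 2) *
        ∫⁻ ω, (‖ftrans f ω‖₊ : ℝ≥0∞) ^ 2 / ENNReal.ofReal (Φhat (δ • ω)) := by
    rw [← lintegral_const_mul' _ _ ENNReal.ofReal_ne_top]
    exact lintegral_mono key2
  constructor
  · calc ENNReal.ofReal (Real.sqrt c₁) *
        (∫⁻ ω, (‖ftrans f ω‖₊ : ℝ≥0∞) ^ 2 / ENNReal.ofReal (Φhat (δ • ω))) ^ (1/2 : ℝ)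
        = (ENNReal.ofReal c₁ *
            ∫⁻ ω, (‖ftrans f ω‖₊ : ℝ≥0∞) ^ 2 / ENNReal.ofReal (Φhat (δ • ω))) ^ (1/2 : ℝ) := by
          rw [ENNReal.mul_rpow_of_nonneg _ _ (by norm_num : (0:ℝ) ≤ 1/2),
            ENNReal.ofReal_rpow_of_pos hc₁, ← Real.sqrt_eq_rpow]
      _ ≤ (∫⁻ ω, (‖ftrans f ω‖₊ : ℝ≥0∞) ^ 2
            * ENNReal.ofReal ((1 + ‖ω‖ ^ 2) ^ σ)) ^ (1/2 : ℝ) :=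
          ENNReal.rpow_le_rpow I1 (by norm_num)
  · calc (∫⁻ ω, (‖ftrans f ω‖₊ : ℝ≥0∞) ^ 2
          * ENNReal.ofReal ((1 + ‖ω‖ ^ 2) ^ σ)) ^ (1/2 : ℝ)
        ≤ (ENNReal.ofReal (c₂ * (δ ^ (-σ)) ^ 2) *
            ∫⁻ ω, (‖ftrans f ω‖₊ : ℝ≥0∞) ^ 2 / ENNReal.ofReal (Φhat (δ • ω))) ^ (1/2 : ℝ) :=
          ENNReal.rpow_le_rpow I2 (by norm_num)
      _ = ENNReal.ofReal (Real.sqrt c₂ * δ ^ (-σ)) *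
            (∫⁻ ω, (‖ftrans f ω‖₊ : ℝ≥0∞) ^ 2 / ENNReal.ofReal (Φhat (δ • ω))) ^ (1/2 : ℝ) := by
          rw [ENNReal.mul_rpow_of_nonneg _ _ (by norm_num : (0:ℝ) ≤ 1/2),
            ENNReal.ofReal_rpow_of_pos (by positivity), ← Real.sqrt_eq_rpow,
            Real.sqrt_mul hc₂.le, Real.sqrt_sq (Real.rpow_nonneg hδ.le _)]
end

section
/- Let d ≥ 1 be an integer and σ > d/2 + 2, and let Φ : ℝ^d → ℝ be a continuous, even, integrable function whose Fourier transform satisfies c₁(1+‖ω‖₂²)^{-σ} ≤ Φ̂(ω) ≤ c₂(1+‖ω‖₂²)^{-σ} for all ω ∈ ℝ^d, for constants 0 < c₁ ≤ c₂. Then there exists a constant C > 0, depending only on d, σ, c₁, c₂, such that for every δ ∈ (0,1], every finite set Y ⊂ ℝ^d with at least two points, every continuous, integrable and square-integrable function u : ℝ^d → ℂ with ‖u‖_{W^{σ,2}(ℝ^d)} < ∞, and every function s = Σ_{y∈Y} c_y Φ_δ(·−y) with real coefficients satisfying the interpolation conditions s(y) = u(y) for all y ∈ Y, one has ‖u − s‖_{W^{σ,2}(ℝ^d)}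 ≤ C δ^{-σ} ‖u‖_{W^{σ,2}(ℝ^d)}. -/
open MeasureTheory ENNReal
open scoped RealInnerProductSpace

namespace StabAux

variable {d : ℕ}

local notation "V" => EuclideanSpace ℝ (Fin d)

lemma norm_char (t : ℝ) : ‖Complex.exp (-(Complex.I * (t : ℂ)))‖ = 1 := by
  have : -(Complex.I * (t : ℂ)) = ((-t : ℝ) : ℂ) * Complex.I := by push_cast; ring
  rw [this]
  exact Complex.norm_exp_ofReal_mul_I _

lemma norm_char' (t : ℝ) : ‖Complex.exp (Complex.I * (t : ℂ))‖ = 1 := by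
  have : Complex.I * (t : ℂ) = ((t : ℝ) : ℂ) * Complex.I := by push_cast; ring
  rw [this]
  exact Complex.norm_exp_ofReal_mul_I _

lemma continuous_char (ω : V) :
    Continuous fun x : V => Complex.exp (-(Complex.I * ((inner ℝ x ω : ℝ) : ℂ))) :=
  Complex.continuous_exp.comp ((continuous_const.mul
    (Complex.continuous_ofReal.comp ((continuous_id.inner continuous_const)))).neg)

lemma continuous_char' (y : V) :
    Continuous fun ω : V => Complex.exp (Complex.I * ((inner ℝ y ω : ℝ) : ℂ)) :=
  Complex.continuous_exp.comp (continuous_const.mul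
    (Complex.continuous_ofReal.comp ((continuous_const.inner continuous_id))))

lemma integrable_char_mul {f : V → ℂ} (hf : Integrable f) (ω : V) :
    Integrable fun x => Complex.exp (-(Complex.I * ((inner ℝ x ω : ℝ) : ℂ))) * f x :=
  hf.bdd_mul (continuous_char ω).aestronglyMeasurable
    (c := 1) (Filter.Eventually.of_forall fun x => le_of_eq (norm_char _))

lemma ftrans_eq_fourierIntegral (f : V → ℂ) (ω : V) :
    ftrans f ω = (((2 * Real.pi) ^ (-(d : ℝ) / 2) : ℝ) : ℂ) *
      FourierTransform.fourier f ((2 * Real.pi)⁻¹ • ω) := by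
  rw [ftrans, Real.fourier_eq']
  congr 1
  apply integral_congr_ae
  filter_upwards with x
  rw [smul_eq_mul, real_inner_smul_right]
  have h2 : -2 * Real.pi * ((2 * Real.pi)⁻¹ * (inner ℝ x ω : ℝ)) = -(inner ℝ x ω : ℝ) := by
    have hπ : (2 * Real.pi) ≠ 0 := by positivity
    field_simp
  congr 1
  rw [h2]
  push_cast
  ring

lemma continuous_ftrans {f : V → ℂ} (hf : Integrable f) : Continuous (ftrans f) := by
  have h1 : Continuous (FourierTransform.fourier f) :=
    VectorFourier.fourierIntegral_continuous (L := innerₗ V) Real.continuous_fourierChar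
      (by exact continuous_inner) hf
  have : ftrans f = fun ω => (((2 * Real.pi) ^ (-(d : ℝ) / 2) : ℝ) : ℂ) *
      FourierTransform.fourier f ((2 * Real.pi)⁻¹ • ω) := by
    ext ω; exact ftrans_eq_fourierIntegral f ω
  rw [this]
  exact continuous_const.mul (h1.comp (continuous_const_smul _))

lemma fourierIntegral_eq_ftrans (f : V → ℂ) (ξ : V) :
    FourierTransform.fourier f ξ
      = (((2 * Real.pi) ^ ((d : ℝ) / 2) : ℝ) : ℂ) * ftrans f ((2 * Real.pi) • ξ) := by
  have hπ : (0 : ℝ) < 2 * Real.pi := by positivity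
  have h := ftrans_eq_fourierIntegral f ((2 * Real.pi) • ξ)
  rw [inv_smul_smul₀ (ne_of_gt hπ)] at h
  rw [h, ← mul_assoc, ← Complex.ofReal_mul, ← Real.rpow_add hπ]
  rw [show (d : ℝ) / 2 + -(d : ℝ) / 2 = 0 by ring, Real.rpow_zero]
  simp

lemma integrable_fourierIntegral_of_ftrans {f : V → ℂ} (hf' : Integrable (ftrans f)) :
    Integrable (FourierTransform.fourier f) := by
  have hπ : (2 * Real.pi) ≠ 0 := by positivity
  have : FourierTransform.fourier f = fun ξ =>
      (((2 * Real.pi) ^ ((d : ℝ) / 2) : ℝ) : ℂ) * ftrans f ((2 * Real.pi) • ξ) := by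
    ext ξ; exact fourierIntegral_eq_ftrans f ξ
  rw [this]
  exact (hf'.comp_smul hπ).const_mul _

lemma key_inversion {f : V → ℂ} (hc : Continuous f) (hf : Integrable f)
    (hf' : Integrable (ftrans f)) (y : V) :
    ∫ ω : V, ftrans f ω * Complex.exp (Complex.I * ((inner ℝ y ω : ℝ) : ℂ))
      = (((2 * Real.pi) ^ ((d : ℝ) / 2) : ℝ) : ℂ) * f y := by
  have hπ : (0 : ℝ) < 2 * Real.pi := by positivity
  have hdim : Module.finrank ℝ (EuclideanSpace ℝ (Fin d)) = d := finrank_euclideanSpace_fin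
  -- change of variables ω = (2π) • ξ
  have hcv : ∫ ω : V, ftrans f ω * Complex.exp (Complex.I * ((inner ℝ y ω : ℝ) : ℂ))
      = ((2 * Real.pi) ^ d : ℝ) • ∫ ξ : V, ftrans f ((2 * Real.pi) • ξ) *
          Complex.exp (Complex.I * ((inner ℝ y ((2 * Real.pi) • ξ) : ℝ) : ℂ)) := by
    rw [MeasureTheory.Measure.integral_comp_smul_of_nonneg
      (volume) (fun ω : V => ftrans f ω * Complex.exp (Complex.I * ((inner ℝ y ω : ℝ) : ℂ)))
      (2 * Real.pi) (hR := le_of_lt hπ), hdim, smul_smul]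
    rw [mul_inv_cancel₀ (pow_ne_zero _ (ne_of_gt hπ)), one_smul]
  rw [hcv]
  have hfou : Integrable (FourierTransform.fourier f) := integrable_fourierIntegral_of_ftrans hf'
  have hinv : FourierTransformInv.fourierInv (FourierTransform.fourier f) y = f y :=
    hf.fourierInv_fourier_eq hfou hc.continuousAt
  rw [Real.fourierInv_eq'] at hinv
  have heq : ∫ ξ : V, ftrans f ((2 * Real.pi) • ξ) *
        Complex.exp (Complex.I * ((inner ℝ y ((2 * Real.pi) • ξ) : ℝ) : ℂ))
      = (((2 * Real.pi) ^ (-(d : ℝ) / 2) : ℝ) : ℂ) * f y := by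
    rw [← hinv, ← integral_const_mul]
    apply integral_congr_ae
    filter_upwards with ξ
    rw [ftrans_eq_fourierIntegral, inv_smul_smul₀ (ne_of_gt hπ)]
    have h3 : (inner ℝ y ((2 * Real.pi) • ξ) : ℝ) = 2 * Real.pi * inner ℝ ξ y := by
      rw [real_inner_smul_right, real_inner_comm]
    rw [h3, smul_eq_mul]
    push_cast
    ring
  rw [heq, Complex.real_smul, ← mul_assoc, ← Complex.ofReal_mul]
  congr 2
  rw [← Real.rpow_natCast (2 * Real.pi) d, ← Real.rpow_add hπ]
  congr 1
  ring

lemma ftrans_sub {f g : V → ℂ} (hf : Integrable f) (hg : Integrable g) (ω : V) :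
    ftrans (fun x => f x - g x) ω = ftrans f ω - ftrans g ω := by
  unfold ftrans
  rw [← mul_sub, ← integral_sub (integrable_char_mul hf ω) (integrable_char_mul hg ω)]
  congr 1
  apply integral_congr_ae; filter_upwards with x; ring

lemma ftrans_finset_sum {ι : Type*} (t : Finset ι) (F : ι → V → ℂ)
    (hF : ∀ i ∈ t, Integrable (F i)) (ω : V) :
    ftrans (fun x => ∑ i ∈ t, F i x) ω = ∑ i ∈ t, ftrans (F i) ω := by
  unfold ftrans
  rw [← Finset.mul_sum]
  congr 1
  rw [← integral_finset_sum t (fun i hi => integrable_char_mul (hF i hi) ω)]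
  apply integral_congr_ae; filter_upwards with x
  rw [Finset.mul_sum]

lemma ftrans_const_mul {f : V → ℂ} (a : ℂ) (ω : V) :
    ftrans (fun x => a * f x) ω = a * ftrans f ω := by
  unfold ftrans
  rw [show (∫ x : V, Complex.exp (-(Complex.I * ((inner ℝ x ω : ℝ) : ℂ))) * (a * f x))
      = ∫ x : V, a * (Complex.exp (-(Complex.I * ((inner ℝ x ω : ℝ) : ℂ))) * f x) by
    apply integral_congr_ae; filter_upwards with x; ring, integral_const_mul]
  ring

lemma integrable_shift_scale {Φc : V → ℂ} (hΦi : Integrable Φc) {δ : ℝ} (hδ : 0 < δ) (y : V) :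
    Integrable fun x : V => Φc (δ⁻¹ • (x - y)) :=
  (hΦi.comp_smul (inv_ne_zero hδ.ne')).comp_sub_right y

lemma ftrans_shift_scale {Φc : V → ℂ} {δ : ℝ} (hδ : 0 < δ) (y ω : V) :
    ftrans (fun x => (((δ ^ d)⁻¹ : ℝ) : ℂ) * Φc (δ⁻¹ • (x - y))) ω
      = Complex.exp (-(Complex.I * ((inner ℝ y ω : ℝ) : ℂ))) * ftrans Φc (δ • ω) := by
  have hdim : Module.finrank ℝ (EuclideanSpace ℝ (Fin d)) = d := finrank_euclideanSpace_fin
  unfold ftrans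
  have h1 : (∫ x : V, Complex.exp (-(Complex.I * ((inner ℝ x ω : ℝ) : ℂ))) *
        ((((δ ^ d)⁻¹ : ℝ) : ℂ) * Φc (δ⁻¹ • (x - y))))
      = ∫ z : V, Complex.exp (-(Complex.I * ((inner ℝ (z + y) ω : ℝ) : ℂ))) *
        ((((δ ^ d)⁻¹ : ℝ) : ℂ) * Φc (δ⁻¹ • z)) := by
    rw [← integral_sub_right_eq_self (fun z : V =>
      Complex.exp (-(Complex.I * ((inner ℝ (z + y) ω : ℝ) : ℂ))) *
        ((((δ ^ d)⁻¹ : ℝ) : ℂ) * Φc (δ⁻¹ • z))) y]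
    apply integral_congr_ae; filter_upwards with x
    rw [sub_add_cancel]
  have h2 : ∀ z : V, Complex.exp (-(Complex.I * ((inner ℝ (z + y) ω : ℝ) : ℂ)))
      = Complex.exp (-(Complex.I * ((inner ℝ y ω : ℝ) : ℂ))) *
        Complex.exp (-(Complex.I * ((inner ℝ z ω : ℝ) : ℂ))) := by
    intro z
    rw [← Complex.exp_add, inner_add_left]
    push_cast
    ring_nf
  have h3 : (∫ z : V, Complex.exp (-(Complex.I * ((inner ℝ z ω : ℝ) : ℂ))) * Φc (δ⁻¹ • z))
      = ((δ ^ d : ℝ) : ℂ) * ∫ z : V,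
          Complex.exp (-(Complex.I * ((inner ℝ z (δ • ω) : ℝ) : ℂ))) * Φc z := by
    have := MeasureTheory.Measure.integral_comp_inv_smul_of_nonneg (volume)
      (fun z : V => Complex.exp (-(Complex.I * ((inner ℝ z (δ • ω) : ℝ) : ℂ))) * Φc z) hδ.le
    rw [hdim] at this
    rw [← Complex.real_smul, ← this]
    apply integral_congr_ae; filter_upwards with x
    congr 2
    rw [real_inner_smul_right, real_inner_smul_left, ← mul_assoc,
      mul_inv_cancel₀ hδ.ne', one_mul]
  calc (((2 * Real.pi) ^ (-(d : ℝ) / 2) : ℝ) : ℂ) *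
        ∫ x : V, Complex.exp (-(Complex.I * ((inner ℝ x ω : ℝ) : ℂ))) *
          ((((δ ^ d)⁻¹ : ℝ) : ℂ) * Φc (δ⁻¹ • (x - y)))
      = (((2 * Real.pi) ^ (-(d : ℝ) / 2) : ℝ) : ℂ) *
        ∫ z : V, Complex.exp (-(Complex.I * ((inner ℝ y ω : ℝ) : ℂ))) *
          ((((δ ^ d)⁻¹ : ℝ) : ℂ) *
            (Complex.exp (-(Complex.I * ((inner ℝ z ω : ℝ) : ℂ))) * Φc (δ⁻¹ • z))) := by
        rw [h1]
        congr 1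
        apply integral_congr_ae; filter_upwards with z
        rw [h2 z]; ring
    _ = (((2 * Real.pi) ^ (-(d : ℝ) / 2) : ℝ) : ℂ) *
        (Complex.exp (-(Complex.I * ((inner ℝ y ω : ℝ) : ℂ))) * ((((δ ^ d)⁻¹ : ℝ) : ℂ) *
          ∫ z : V, Complex.exp (-(Complex.I * ((inner ℝ z ω : ℝ) : ℂ))) * Φc (δ⁻¹ • z))) := by
        rw [integral_const_mul, integral_const_mul]
    _ = Complex.exp (-(Complex.I * ((inner ℝ y ω : ℝ) : ℂ))) *
        ((((2 * Real.pi) ^ (-(d : ℝ) / 2) : ℝ) : ℂ) *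
          ∫ z : V, Complex.exp (-(Complex.I * ((inner ℝ z (δ • ω) : ℝ) : ℂ))) * Φc z) := by
        rw [h3]
        have hne : ((δ : ℝ) ^ d : ℂ) ≠ 0 := by
          norm_cast
          positivity
        field_simp
        have hδd : ((1 / δ ^ d : ℝ) : ℂ) * ((δ ^ d : ℝ) : ℂ) = 1 := by
          rw [← Complex.ofReal_mul, one_div, inv_mul_cancel₀ (pow_ne_zero _ hδ.ne'),
            Complex.ofReal_one]
        rw [mul_assoc (_ : ℂ) ((1 / δ ^ d : ℝ) : ℂ), hδd, mul_one]

lemma integrable_mul_char' {f : V → ℂ} (hf : Integrable f) (y : V) :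
    Integrable fun ω => f ω * Complex.exp (Complex.I * ((inner ℝ y ω : ℝ) : ℂ)) := by
  have := hf.bdd_mul (continuous_char' y).aestronglyMeasurable
    (c := 1) (Filter.Eventually.of_forall fun x => le_of_eq (norm_char' _))
  simpa [mul_comm] using this

lemma integrable_of_ofReal_lintegral {g : V → ℝ} (hg : AEStronglyMeasurable g volume)
    (h0 : ∀ x, 0 ≤ g x)
    (hfin : (∫⁻ x, ENNReal.ofReal (g x)) < ∞) : Integrable g := by
  refine ⟨hg, ?_⟩
  rw [HasFiniteIntegral, lintegral_enorm_of_nonneg h0]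
  exact hfin

lemma lintegral_sq_weight (f : V → ℂ) (g : V → ℝ) :
    (∫⁻ x, (‖f x‖₊ : ℝ≥0∞) ^ 2 * ENNReal.ofReal (g x))
      = ∫⁻ x, ENNReal.ofReal (‖f x‖ ^ 2 * g x) := by
  apply lintegral_congr; intro x
  rw [ENNReal.ofReal_mul (sq_nonneg _), sq, sq, ENNReal.ofReal_mul (norm_nonneg _),
    ofReal_norm, enorm_eq_nnnorm]

lemma amgm (a t : ℝ) (ha : 0 ≤ a) (ht : 0 < t) : a ≤ (a ^ 2 * t + t⁻¹) / 2 := by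
  have h1 : 0 ≤ (a * t - 1) ^ 2 := sq_nonneg _
  have h2 : t * t⁻¹ = 1 := mul_inv_cancel₀ ht.ne'
  have h3 : 0 < t⁻¹ := inv_pos.2 ht
  nlinarith [mul_pos ht h3, sq_nonneg a, mul_nonneg (mul_nonneg ha ht.le) h3.le]

end StabAux

open StabAux in
set_option maxHeartbeats 1000000 in
theorem stmt9 (d : ℕ) (hd : 1 ≤ d) (σ : ℝ) (hσ : (d : ℝ) / 2 + 2 < σ)
    (c₁ c₂ : ℝ) (hc₁ : 0 < c₁) (hc₁₂ : c₁ ≤ c₂)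
    (Φ : EuclideanSpace ℝ (Fin d) → ℝ) (hΦc : Continuous Φ)
    (hΦeven : ∀ x, Φ (-x) = Φ x)
    (hΦi : Integrable (fun x => (Φ x : ℂ)))
    (hlow : ∀ ω, c₁ * (1 + ‖ω‖ ^ 2) ^ (-σ) ≤ (ftrans (fun x => (Φ x : ℂ)) ω).re)
    (hup : ∀ ω, (ftrans (fun x => (Φ x : ℂ)) ω).re ≤ c₂ * (1 + ‖ω‖ ^ 2) ^ (-σ))
    (hreal : ∀ ω, (ftrans (fun x => (Φ x : ℂ)) ω).im = 0) :
    ∃ C > (0 : ℝ), ∀ δ : ℝ, 0 < δ → δ ≤ 1 →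
      ∀ (Y : Finset (EuclideanSpace ℝ (Fin d))), 2 ≤ Y.card →
      ∀ u : EuclideanSpace ℝ (Fin d) → ℂ, Continuous u → Integrable u → MemLp u 2 →
        (∫⁻ ω, (‖ftrans u ω‖₊ : ℝ≥0∞) ^ 2
            * ENNReal.ofReal ((1 + ‖ω‖ ^ 2) ^ σ)) ^ (1/2 : ℝ) < ∞ →
      ∀ c : EuclideanSpace ℝ (Fin d) → ℝ, ∀ s : EuclideanSpace ℝ (Fin d) → ℝ,
        (∀ x, s x = ∑ y ∈ Y, c y * ((δ ^ d)⁻¹ * Φ (δ⁻¹ • (x - y)))) →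
        (∀ y ∈ Y, (s y : ℂ) = u y) →
        (∫⁻ ω, (‖ftrans (fun x => u x - (s x : ℂ)) ω‖₊ : ℝ≥0∞) ^ 2
            * ENNReal.ofReal ((1 + ‖ω‖ ^ 2) ^ σ)) ^ (1/2 : ℝ)
          ≤ ENNReal.ofReal (C * δ ^ (-σ)) *
            (∫⁻ ω, (‖ftrans u ω‖₊ : ℝ≥0∞) ^ 2
              * ENNReal.ofReal ((1 + ‖ω‖ ^ 2) ^ σ)) ^ (1/2 : ℝ) := by
  have hd1 : (1 : ℝ) ≤ (d : ℝ) := by exact_mod_cast hd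
  have hσ0 : 0 < σ := by linarith
  have hc₂ : 0 < c₂ := lt_of_lt_of_le hc₁ hc₁₂
  refine ⟨Real.sqrt (c₂ / c₁), Real.sqrt_pos.2 (div_pos hc₂ hc₁), ?_⟩
  intro δ hδ hδ1 Y _hY u hu hui _hu2 hufin c s hs hinterp
  set Φc : EuclideanSpace ℝ (Fin d) → ℂ := fun x => (Φ x : ℂ) with hΦcdef
  have hφcont : Continuous (ftrans Φc) := continuous_ftrans hΦi
  have hφre : ∀ ζ, ftrans Φc ζ = (((ftrans Φc ζ).re : ℝ) : ℂ) := by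
    intro ζ
    apply Complex.ext
    · simp
    · simp [hreal ζ]
  set t : EuclideanSpace ℝ (Fin d) → ℝ := fun ω => (1 + ‖ω‖ ^ 2) ^ σ with htdef
  have htpos : ∀ ω : EuclideanSpace ℝ (Fin d), 0 < t ω :=
    fun ω => Real.rpow_pos_of_pos (by positivity) σ
  have htcont : Continuous t := by
    apply Continuous.rpow_const (continuous_const.add (continuous_norm.pow 2))
    exact fun x => Or.inr hσ0.le
  set W : EuclideanSpace ℝ (Fin d) → ℝ := fun ω => (ftrans Φc (δ • ω)).re with hWdef
  have hWcont : Continuous W :=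
    Complex.continuous_re.comp (hφcont.comp (continuous_const_smul _))
  have hWlb : ∀ ω, c₁ * (1 + ‖δ • ω‖ ^ 2) ^ (-σ) ≤ W ω := fun ω => hlow (δ • ω)
  have hWub : ∀ ω, W ω ≤ c₂ * (1 + ‖δ • ω‖ ^ 2) ^ (-σ) := fun ω => hup (δ • ω)
  have hWpos : ∀ ω, 0 < W ω := by
    intro ω
    refine lt_of_lt_of_le ?_ (hWlb ω)
    positivity
  have hnormsmul : ∀ ω : EuclideanSpace ℝ (Fin d), ‖δ • ω‖ = δ * ‖ω‖ := by
    intro ω; rw [norm_smul, Real.norm_eq_abs, abs_of_pos hδ]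
  have hkey1 : ∀ ω, t ω * W ω ≤ c₂ * (δ ^ (-σ)) ^ 2 := by
    intro ω
    have hA : (0 : ℝ) < 1 + ‖δ • ω‖ ^ 2 := by positivity
    have hB : (0 : ℝ) < 1 + ‖ω‖ ^ 2 := by positivity
    have hδ2 : (0 : ℝ) < δ ^ 2 := by positivity
    have h1 : (1 + ‖ω‖ ^ 2) ≤ (1 + ‖δ • ω‖ ^ 2) * (δ ^ 2)⁻¹ := by
      rw [← div_eq_mul_inv, le_div_iff₀ hδ2, hnormsmul ω]
      nlinarith [sq_nonneg ‖ω‖, hδ1, hδ]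
    have hpow : ((δ ^ 2)⁻¹ : ℝ) ^ σ = (δ ^ (-σ)) ^ 2 := by
      rw [← Real.rpow_natCast δ 2, ← Real.rpow_neg_one (δ ^ ((2 : ℕ) : ℝ)),
        ← Real.rpow_mul hδ.le, ← Real.rpow_mul hδ.le,
        ← Real.rpow_natCast (δ ^ (-σ)) 2, ← Real.rpow_mul hδ.le]
      norm_num
      ring_nf
    have h2 : t ω ≤ (1 + ‖δ • ω‖ ^ 2) ^ σ * (δ ^ (-σ)) ^ 2 := by
      have h3 : t ω ≤ ((1 + ‖δ • ω‖ ^ 2) * (δ ^ 2)⁻¹) ^ σ :=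
        Real.rpow_le_rpow hB.le h1 hσ0.le
      rw [Real.mul_rpow hA.le (by positivity), hpow] at h3
      exact h3
    calc t ω * W ω
        ≤ ((1 + ‖δ • ω‖ ^ 2) ^ σ * (δ ^ (-σ)) ^ 2) * (c₂ * (1 + ‖δ • ω‖ ^ 2) ^ (-σ)) :=
          mul_le_mul h2 (hWub ω) (hWpos ω).le (by positivity)
      _ = c₂ * (δ ^ (-σ)) ^ 2 * ((1 + ‖δ • ω‖ ^ 2) ^ σ * (1 + ‖δ • ω‖ ^ 2) ^ (-σ)) := by ring
      _ = c₂ * (δ ^ (-σ)) ^ 2 := by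
          rw [← Real.rpow_add hA, add_neg_cancel, Real.rpow_zero, mul_one]
  have hkey2 : ∀ ω, (W ω)⁻¹ ≤ c₁⁻¹ * t ω := by
    intro ω
    have hB : (0 : ℝ) < 1 + ‖ω‖ ^ 2 := by positivity
    have hA : (0 : ℝ) < 1 + ‖δ • ω‖ ^ 2 := by positivity
    have h1 : (1 + ‖δ • ω‖ ^ 2) ≤ 1 + ‖ω‖ ^ 2 := by
      rw [hnormsmul ω]
      nlinarith [mul_nonneg (mul_nonneg (sub_nonneg.2 hδ1) (by linarith : (0:ℝ) ≤ 1 + δ))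
        (sq_nonneg ‖ω‖)]
    have h2 : (1 + ‖ω‖ ^ 2) ^ (-σ) ≤ (1 + ‖δ • ω‖ ^ 2) ^ (-σ) := by
      rw [Real.rpow_neg hB.le, Real.rpow_neg hA.le]
      exact inv_anti₀ (Real.rpow_pos_of_pos hA σ)
        (Real.rpow_le_rpow hA.le h1 hσ0.le)
    have h3 : c₁ * (1 + ‖ω‖ ^ 2) ^ (-σ) ≤ W ω :=
      le_trans (mul_le_mul_of_nonneg_left h2 hc₁.le) (hWlb ω)
    have h4 : 0 < c₁ * (1 + ‖ω‖ ^ 2) ^ (-σ) := by positivity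
    calc (W ω)⁻¹ ≤ (c₁ * (1 + ‖ω‖ ^ 2) ^ (-σ))⁻¹ := inv_anti₀ h4 h3
      _ = c₁⁻¹ * t ω := by
          rw [mul_inv, Real.rpow_neg hB.le, inv_inv]
  -- u-hat facts
  set uh := ftrans u with huhdef
  have huhcont : Continuous uh := continuous_ftrans hui
  have hMfin : (∫⁻ ω, ENNReal.ofReal (‖uh ω‖ ^ 2 * t ω)) < ∞ := by
    rw [← lintegral_sq_weight]
    by_contra hcon
    rw [not_lt, top_le_iff] at hcon
    rw [hcon] at hufin
    simp [ENNReal.top_rpow_of_pos (by norm_num : (0:ℝ) < 1/2)] at hufin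
  have huh2 : Integrable (fun ω => ‖uh ω‖ ^ 2 * t ω) :=
    integrable_of_ofReal_lintegral ((huhcont.norm.pow 2).mul htcont).aestronglyMeasurable
      (fun ω => mul_nonneg (sq_nonneg _) (htpos ω).le) hMfin
  have hdlt : (d : ℝ) < 2 * σ := by linarith
  have hdecay : Integrable (fun ω : EuclideanSpace ℝ (Fin d) => (1 + ‖ω‖ ^ 2) ^ (-σ)) := by
    have h := integrable_rpow_neg_one_add_norm_sq (E := EuclideanSpace ℝ (Fin d))
      (μ := volume) (r := 2 * σ) (by rw [finrank_euclideanSpace_fin]; exact hdlt)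
    simpa [show -(2 * σ) / 2 = -σ by ring] using h
  have htinv : ∀ ω : EuclideanSpace ℝ (Fin d), (t ω)⁻¹ = (1 + ‖ω‖ ^ 2) ^ (-σ) := by
    intro ω
    rw [htdef]
    exact (Real.rpow_neg (by positivity) σ).symm
  have huhi : Integrable uh := by
    refine Integrable.mono' ((huh2.add hdecay).div_const 2) huhcont.aestronglyMeasurable ?_
    filter_upwards with ω
    have h := amgm ‖uh ω‖ (t ω) (norm_nonneg _) (htpos ω)
    rw [htinv ω] at h
    simpa using h
  -- s facts
  set sC : EuclideanSpace ℝ (Fin d) → ℂ := fun x => ((s x : ℝ) : ℂ) with hsCdef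
  have hsrepr : sC = fun x => ∑ y ∈ Y, (c y : ℂ) *
      ((((δ ^ d)⁻¹ : ℝ) : ℂ) * Φc (δ⁻¹ • (x - y))) := by
    funext x
    rw [hsCdef]
    show ((s x : ℝ) : ℂ) = _
    rw [hs x]
    push_cast
    rfl
  have hscont : Continuous s := by
    have : s = fun x => ∑ y ∈ Y, c y * ((δ ^ d)⁻¹ * Φ (δ⁻¹ • (x - y))) := funext hs
    rw [this]
    exact continuous_finset_sum _ fun y _ => continuous_const.mul (continuous_const.mul
      (hΦc.comp (f := fun x => δ⁻¹ • (x - y)) (by fun_prop)))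
  have hsCcont : Continuous sC := Complex.continuous_ofReal.comp hscont
  have hsCi : Integrable sC := by
    rw [hsrepr]
    exact integrable_finset_sum _ fun y _ =>
      ((integrable_shift_scale hΦi hδ y).const_mul _).const_mul _
  set E : EuclideanSpace ℝ (Fin d) → ℂ := fun ω => ∑ y ∈ Y,
    (c y : ℂ) * Complex.exp (-(Complex.I * ((inner ℝ y ω : ℝ) : ℂ))) with hEdef
  have hsh : ∀ ω, ftrans sC ω = ((W ω : ℝ) : ℂ) * E ω := by
    intro ω
    rw [hsrepr, ftrans_finset_sum Y _ (fun y _ =>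
      ((integrable_shift_scale hΦi hδ y).const_mul _).const_mul _) ω, hEdef,
      Finset.mul_sum]
    apply Finset.sum_congr rfl
    intro y _
    rw [ftrans_const_mul, ftrans_shift_scale hδ y ω, hWdef]
    rw [← hφre (δ • ω)]
    ring
  have hEcont : Continuous E := by
    rw [hEdef]
    exact continuous_finset_sum _ fun y _ => continuous_const.mul
      (Complex.continuous_exp.comp ((continuous_const.mul
        (Complex.continuous_ofReal.comp (continuous_const.inner continuous_id))).neg))
  set B := ∑ y ∈ Y, |c y| with hBdef
  have hEbd : ∀ ω, ‖E ω‖ ≤ B := by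
    intro ω
    rw [hEdef, hBdef]
    refine (norm_sum_le _ _).trans ?_
    apply Finset.sum_le_sum
    intro y _
    rw [norm_mul, norm_char, mul_one, Complex.norm_real, Real.norm_eq_abs]
  have hBnn : 0 ≤ B := by
    rw [hBdef]; exact Finset.sum_nonneg fun y _ => abs_nonneg _
  have hshi : Integrable (ftrans sC) := by
    refine Integrable.mono' ((hdecay.comp_smul hδ.ne').const_mul (c₂ * B))
      (continuous_ftrans hsCi).aestronglyMeasurable ?_
    filter_upwards with ω
    rw [hsh ω, norm_mul, Complex.norm_real, Real.norm_eq_abs, abs_of_pos (hWpos ω)]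
    calc W ω * ‖E ω‖ ≤ (c₂ * (1 + ‖δ • ω‖ ^ 2) ^ (-σ)) * B :=
          mul_le_mul (hWub ω) (hEbd ω) (norm_nonneg _) (by positivity)
      _ = c₂ * B * (1 + ‖δ • ω‖ ^ 2) ^ (-σ) := by ring
  -- inversion identities
  have hinvu : ∀ y, (∫ ω, uh ω * Complex.exp (Complex.I * ((inner ℝ y ω : ℝ) : ℂ)))
      = (((2 * Real.pi) ^ ((d : ℝ) / 2) : ℝ) : ℂ) * u y :=
    fun y => key_inversion hu hui huhi y
  have hinvs : ∀ y, (∫ ω, ftrans sC ω * Complex.exp (Complex.I * ((inner ℝ y ω : ℝ) : ℂ)))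
      = (((2 * Real.pi) ^ ((d : ℝ) / 2) : ℝ) : ℂ) * sC y :=
    fun y => key_inversion hsCcont hsCi hshi y
  have hconjE : ∀ (f : EuclideanSpace ℝ (Fin d) → ℂ) ω, f ω * (starRingEnd ℂ) (E ω)
      = ∑ y ∈ Y, (c y : ℂ) * (f ω * Complex.exp (Complex.I * ((inner ℝ y ω : ℝ) : ℂ))) := by
    intro f ω
    rw [hEdef]
    simp only [map_sum, map_mul, ← Complex.exp_conj, map_neg, Complex.conj_I,
      Complex.conj_ofReal, Finset.mul_sum]
    apply Finset.sum_congr rfl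
    intro y _
    ring
  set Q : ℝ := (2 * Real.pi) ^ ((d : ℝ) / 2) * ∑ y ∈ Y, c y * s y with hQdef
  have hintE : ∀ {f : EuclideanSpace ℝ (Fin d) → ℂ}, Integrable f →
      Integrable (fun ω => f ω * (starRingEnd ℂ) (E ω)) := by
    intro f hf
    have h1 : Integrable (fun ω => ∑ y ∈ Y,
        (c y : ℂ) * (f ω * Complex.exp (Complex.I * ((inner ℝ y ω : ℝ) : ℂ)))) :=
      integrable_finset_sum _ fun y _ => (integrable_mul_char' hf y).const_mul _
    exact h1.congr (Filter.Eventually.of_forall fun ω => (hconjE f ω).symm)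
  have hcrossint : ∀ {f : EuclideanSpace ℝ (Fin d) → ℂ}, Integrable f →
      (∀ y ∈ Y, (∫ ω, f ω * Complex.exp (Complex.I * ((inner ℝ y ω : ℝ) : ℂ)))
        = (((2 * Real.pi) ^ ((d : ℝ) / 2) : ℝ) : ℂ) * ((s y : ℝ) : ℂ)) →
      (∫ ω, f ω * (starRingEnd ℂ) (E ω)) = (Q : ℂ) := by
    intro f hf hval
    rw [integral_congr_ae (Filter.Eventually.of_forall (hconjE f))]
    rw [integral_finset_sum _ (fun y _ => (integrable_mul_char' hf y).const_mul _)]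
    have h2 : ∀ y ∈ Y, (∫ ω, (c y : ℂ) * (f ω * Complex.exp (Complex.I * ((inner ℝ y ω : ℝ) : ℂ))))
        = (c y : ℂ) * ((((2 * Real.pi) ^ ((d : ℝ) / 2) : ℝ) : ℂ) * ((s y : ℝ) : ℂ)) := by
      intro y hy
      rw [integral_const_mul, hval y hy]
    rw [Finset.sum_congr rfl h2, hQdef]
    push_cast
    rw [Finset.mul_sum]
    apply Finset.sum_congr rfl
    intro y _
    ring
  have hTu : (∫ ω, uh ω * (starRingEnd ℂ) (E ω)) = (Q : ℂ) := by
    apply hcrossint huhi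
    intro y hy
    rw [hinvu y, hinterp y hy]
  have hTs : (∫ ω, ftrans sC ω * (starRingEnd ℂ) (E ω)) = (Q : ℂ) := by
    apply hcrossint hshi
    intro y hy
    rw [hinvs y]
  -- real integrands
  set g2 : EuclideanSpace ℝ (Fin d) → ℝ := fun ω => ‖uh ω‖ ^ 2 * (W ω)⁻¹ with hg2def
  set cr : EuclideanSpace ℝ (Fin d) → ℝ := fun ω => (uh ω * (starRingEnd ℂ) (E ω)).re
    with hcrdef
  set g3 : EuclideanSpace ℝ (Fin d) → ℝ := fun ω => W ω * ‖E ω‖ ^ 2 with hg3def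
  have hWinvcont : Continuous fun ω => (W ω)⁻¹ := hWcont.inv₀ fun ω => (hWpos ω).ne'
  have hIg2 : Integrable g2 := by
    refine Integrable.mono' (huh2.const_mul c₁⁻¹)
      ((huhcont.norm.pow 2).mul hWinvcont).aestronglyMeasurable ?_
    filter_upwards with ω
    rw [hg2def]
    have h0 : (0:ℝ) ≤ ‖uh ω‖ ^ 2 * (W ω)⁻¹ :=
      mul_nonneg (sq_nonneg _) (inv_nonneg.2 (hWpos ω).le)
    rw [Real.norm_eq_abs, abs_of_nonneg h0]
    calc ‖uh ω‖ ^ 2 * (W ω)⁻¹ ≤ ‖uh ω‖ ^ 2 * (c₁⁻¹ * t ω) :=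
          mul_le_mul_of_nonneg_left (hkey2 ω) (sq_nonneg _)
      _ = c₁⁻¹ * (‖uh ω‖ ^ 2 * t ω) := by ring
  have hIcr : Integrable cr := by
    have := (hintE huhi).re
    simpa [hcrdef] using this
  have hIg3 : Integrable g3 := by
    refine Integrable.mono' ((hdecay.comp_smul hδ.ne').const_mul (c₂ * B ^ 2))
      (hWcont.mul (hEcont.norm.pow 2)).aestronglyMeasurable ?_
    filter_upwards with ω
    rw [hg3def]
    have h0 : (0:ℝ) ≤ W ω * ‖E ω‖ ^ 2 := mul_nonneg (hWpos ω).le (sq_nonneg _)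
    rw [Real.norm_eq_abs, abs_of_nonneg h0]
    calc W ω * ‖E ω‖ ^ 2 ≤ (c₂ * (1 + ‖δ • ω‖ ^ 2) ^ (-σ)) * B ^ 2 :=
          mul_le_mul (hWub ω) (by
            have := hEbd ω
            nlinarith [norm_nonneg (E ω)]) (sq_nonneg _) (by positivity)
      _ = c₂ * B ^ 2 * (1 + ‖δ • ω‖ ^ 2) ^ (-σ) := by ring
  -- pointwise expansion
  have hexp : ∀ ω, ‖uh ω - ftrans sC ω‖ ^ 2 * (W ω)⁻¹ = g2 ω - 2 * cr ω + g3 ω := by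
    intro ω
    rw [hsh ω, hg2def, hcrdef, hg3def]
    have hW := (hWpos ω).ne'
    have h1 : ‖uh ω - ((W ω : ℝ) : ℂ) * E ω‖ ^ 2
        = ‖uh ω‖ ^ 2 + (W ω) ^ 2 * ‖E ω‖ ^ 2
          - 2 * (W ω) * (uh ω * (starRingEnd ℂ) (E ω)).re := by
      rw [Complex.sq_norm, Complex.normSq_sub, Complex.normSq_mul,
        Complex.normSq_ofReal, map_mul, Complex.conj_ofReal]
      rw [show uh ω * (((W ω : ℝ) : ℂ) * (starRingEnd ℂ) (E ω))
          = ((W ω : ℝ) : ℂ) * (uh ω * (starRingEnd ℂ) (E ω)) by ring]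
      rw [Complex.re_ofReal_mul, Complex.normSq_eq_norm_sq, Complex.normSq_eq_norm_sq]
      ring
    rw [h1]
    field_simp
    ring
  have hIdiff : Integrable (fun ω => ‖uh ω - ftrans sC ω‖ ^ 2 * (W ω)⁻¹) :=
    ((hIg2.sub (hIcr.const_mul 2)).add hIg3).congr
      (Filter.Eventually.of_forall fun ω => (hexp ω).symm)
  have hcrQ : (∫ ω, cr ω) = Q := by
    have h := integral_re (hintE huhi)
    rw [hTu] at h
    simpa [hcrdef] using h
  have hg3Q : (∫ ω, g3 ω) = Q := by
    have h1 : ∀ ω, g3 ω = (ftrans sC ω * (starRingEnd ℂ) (E ω)).re := by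
      intro ω
      rw [hg3def, hsh ω]
      rw [show ((W ω : ℝ) : ℂ) * E ω * (starRingEnd ℂ) (E ω)
          = ((W ω : ℝ) : ℂ) * (E ω * (starRingEnd ℂ) (E ω)) by ring]
      rw [Complex.mul_conj, ← Complex.ofReal_mul, Complex.ofReal_re,
        Complex.normSq_eq_norm_sq]
    rw [integral_congr_ae (Filter.Eventually.of_forall h1)]
    have h := integral_re (hintE hshi)
    rw [hTs] at h
    simpa using h
  have hQnn : 0 ≤ Q := by
    rw [← hg3Q]
    exact integral_nonneg fun ω => mul_nonneg (hWpos ω).le (sq_nonneg _)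
  have hcore : (∫ ω, ‖uh ω - ftrans sC ω‖ ^ 2 * (W ω)⁻¹) ≤ ∫ ω, g2 ω := by
    rw [integral_congr_ae (Filter.Eventually.of_forall hexp),
      integral_add (f := fun ω => g2 ω - 2 * cr ω) (g := g3)
        (hIg2.sub (hIcr.const_mul 2)) hIg3,
      integral_sub (f := g2) (g := fun ω => 2 * cr ω) hIg2 (hIcr.const_mul 2),
      integral_const_mul, hcrQ, hg3Q]
    linarith
  -- final chain
  have hdiffeq : ∀ ω, ftrans (fun x => u x - ((s x : ℝ) : ℂ)) ω = uh ω - ftrans sC ω := by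
    intro ω
    rw [huhdef]
    exact ftrans_sub hui hsCi ω
  have hL1 : (∫⁻ ω, (‖ftrans (fun x => u x - ((s x : ℝ) : ℂ)) ω‖₊ : ℝ≥0∞) ^ 2
      * ENNReal.ofReal ((1 + ‖ω‖ ^ 2) ^ σ))
      = ∫⁻ ω, ENNReal.ofReal (‖uh ω - ftrans sC ω‖ ^ 2 * t ω) := by
    rw [lintegral_sq_weight]
    apply lintegral_congr
    intro ω
    rw [hdiffeq ω]
  have hR1 : (∫⁻ ω, (‖uh ω‖₊ : ℝ≥0∞) ^ 2 * ENNReal.ofReal ((1 + ‖ω‖ ^ 2) ^ σ))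
      = ∫⁻ ω, ENNReal.ofReal (‖uh ω‖ ^ 2 * t ω) := lintegral_sq_weight _ _
  set m : ℝ := Real.sqrt (c₂ / c₁) * δ ^ (-σ) with hmdef
  have hm : 0 ≤ m := by positivity
  have hKeq : (c₂ * (δ ^ (-σ)) ^ 2) * c₁⁻¹ = m ^ 2 := by
    rw [hmdef, mul_pow, Real.sq_sqrt (div_pos hc₂ hc₁).le]
    field_simp
  have hdiffnn : ∀ ω, 0 ≤ ‖uh ω - ftrans sC ω‖ ^ 2 * (W ω)⁻¹ :=
    fun ω => mul_nonneg (sq_nonneg _) (inv_nonneg.2 (hWpos ω).le)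
  have hchain : (∫⁻ ω, ENNReal.ofReal (‖uh ω - ftrans sC ω‖ ^ 2 * t ω))
      ≤ ENNReal.ofReal (m ^ 2) * ∫⁻ ω, ENNReal.ofReal (‖uh ω‖ ^ 2 * t ω) := by
    calc (∫⁻ ω, ENNReal.ofReal (‖uh ω - ftrans sC ω‖ ^ 2 * t ω))
        ≤ ∫⁻ ω, ENNReal.ofReal ((‖uh ω - ftrans sC ω‖ ^ 2 * (W ω)⁻¹)
            * (c₂ * (δ ^ (-σ)) ^ 2)) := by
          apply lintegral_mono
          intro ω
          apply ENNReal.ofReal_le_ofReal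
          have hW := hWpos ω
          have ht : t ω ≤ (W ω)⁻¹ * (c₂ * (δ ^ (-σ)) ^ 2) := by
            have h := hkey1 ω
            rw [← le_div_iff₀ hW] at h
            rw [div_eq_mul_inv] at h
            calc t ω ≤ (c₂ * (δ ^ (-σ)) ^ 2) * (W ω)⁻¹ := h
              _ = (W ω)⁻¹ * (c₂ * (δ ^ (-σ)) ^ 2) := mul_comm _ _
          calc ‖uh ω - ftrans sC ω‖ ^ 2 * t ω
              ≤ ‖uh ω - ftrans sC ω‖ ^ 2 * ((W ω)⁻¹ * (c₂ * (δ ^ (-σ)) ^ 2)) :=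
                mul_le_mul_of_nonneg_left ht (sq_nonneg _)
            _ = (‖uh ω - ftrans sC ω‖ ^ 2 * (W ω)⁻¹) * (c₂ * (δ ^ (-σ)) ^ 2) := by ring
      _ = ∫⁻ ω, ENNReal.ofReal (‖uh ω - ftrans sC ω‖ ^ 2 * (W ω)⁻¹)
            * ENNReal.ofReal (c₂ * (δ ^ (-σ)) ^ 2) := by
          apply lintegral_congr
          intro ω
          rw [ENNReal.ofReal_mul (hdiffnn ω)]
      _ = (∫⁻ ω, ENNReal.ofReal (‖uh ω - ftrans sC ω‖ ^ 2 * (W ω)⁻¹))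
            * ENNReal.ofReal (c₂ * (δ ^ (-σ)) ^ 2) :=
          lintegral_mul_const'' _ ((ENNReal.continuous_ofReal.comp
            (((huhcont.sub (continuous_ftrans hsCi)).norm.pow 2).mul
              hWinvcont)).measurable.aemeasurable)
      _ ≤ ENNReal.ofReal (∫ ω, g2 ω) * ENNReal.ofReal (c₂ * (δ ^ (-σ)) ^ 2) := by
          apply mul_le_mul_left
          rw [← MeasureTheory.ofReal_integral_eq_lintegral_ofReal hIdiff
            (Filter.Eventually.of_forall hdiffnn)]
          exact ENNReal.ofReal_le_ofReal hcore
      _ ≤ ENNReal.ofReal (c₁⁻¹ * ∫ ω, ‖uh ω‖ ^ 2 * t ω)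
            * ENNReal.ofReal (c₂ * (δ ^ (-σ)) ^ 2) := by
          apply mul_le_mul_left
          apply ENNReal.ofReal_le_ofReal
          have hmono : (∫ ω, g2 ω) ≤ ∫ ω, c₁⁻¹ * (‖uh ω‖ ^ 2 * t ω) := by
            apply integral_mono hIg2 (huh2.const_mul _)
            intro ω
            show ‖uh ω‖ ^ 2 * (W ω)⁻¹ ≤ _
            calc ‖uh ω‖ ^ 2 * (W ω)⁻¹ ≤ ‖uh ω‖ ^ 2 * (c₁⁻¹ * t ω) :=
                mul_le_mul_of_nonneg_left (hkey2 ω) (sq_nonneg _)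
              _ = c₁⁻¹ * (‖uh ω‖ ^ 2 * t ω) := by ring
          rw [integral_const_mul] at hmono
          exact hmono
      _ = ENNReal.ofReal (m ^ 2) * ∫⁻ ω, ENNReal.ofReal (‖uh ω‖ ^ 2 * t ω) := by
          rw [ENNReal.ofReal_mul (inv_nonneg.2 hc₁.le),
            MeasureTheory.ofReal_integral_eq_lintegral_ofReal huh2
              (Filter.Eventually.of_forall fun ω => mul_nonneg (sq_nonneg _) (htpos ω).le)]
          rw [show ENNReal.ofReal c₁⁻¹ * (∫⁻ ω, ENNReal.ofReal (‖uh ω‖ ^ 2 * t ω))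
              * ENNReal.ofReal (c₂ * (δ ^ (-σ)) ^ 2)
              = (ENNReal.ofReal (c₂ * (δ ^ (-σ)) ^ 2) * ENNReal.ofReal c₁⁻¹)
                * (∫⁻ ω, ENNReal.ofReal (‖uh ω‖ ^ 2 * t ω)) by ring,
            ← ENNReal.ofReal_mul (by positivity : (0:ℝ) ≤ c₂ * (δ ^ (-σ)) ^ 2), hKeq]
  rw [hL1, hR1]
  refine le_trans (ENNReal.rpow_le_rpow hchain (by norm_num)) ?_
  rw [ENNReal.mul_rpow_of_nonneg _ _ (by norm_num : (0:ℝ) ≤ 1/2)]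
  have hpow2 : (ENNReal.ofReal (m ^ 2)) ^ (1/2 : ℝ) = ENNReal.ofReal m := by
    rw [ENNReal.ofReal_pow hm, ← ENNReal.rpow_natCast (ENNReal.ofReal m) 2,
      ← ENNReal.rpow_mul]
    norm_num
  rw [hpow2]
end

section
/- Let d ≥ 1 be an integer and σ > d/2, and let Φ : ℝ^d → ℝ be a continuous integrable function whose Fourier transform satisfies c₁(1+‖ω‖₂²)^{-σ} ≤ Φ̂(ω) ≤ c₂(1+‖ω‖₂²)^{-σ} for all ω ∈ ℝ^d, for constants 0 < c₁ ≤ c₂. Then for every δ ∈ (0,1] and every integrable and square-integrable g : ℝ^d → ℂ, the transition inequality ‖g‖²_{Φ_δ} ≤ (2^σ/c₁)·(‖g‖²_{L²(ℝ^d)} + δ^{2σ} ‖g‖²_{W^{σ,2}(ℝ^d)}) holds (as an inequality of possibly infinite quantities). -/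
open MeasureTheory ENNReal
open scoped RealInnerProductSpace

open Real Complex Filter Topology
open scoped NNReal
open scoped FourierTransform

namespace Stmt10Aux

variable {d : ℕ}

lemma ftrans_eq_fourierIntegral (g : EuclideanSpace ℝ (Fin d) → ℂ) (ω : EuclideanSpace ℝ (Fin d)) :
    ftrans g ω = (((2 * π) ^ (-(d : ℝ) / 2) : ℝ) : ℂ) * 𝓕 g ((2 * π)⁻¹ • ω) := by
  rw [ftrans, Real.fourier_eq']
  congr 1
  refine integral_congr_ae (Eventually.of_forall fun x => ?_)
  simp only [smul_eq_mul]
  have h1 : ⟪x, (2 * π)⁻¹ • ω⟫ = (2*π)⁻¹ * ⟪x, ω⟫ := real_inner_smul_right x ω _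
  rw [h1]
  have hπ : (2 * π) ≠ 0 := by positivity
  have : (-2 * π * ((2*π)⁻¹ * ⟪x, ω⟫) : ℝ) = -⟪x, ω⟫ := by field_simp
  rw [this]
  push_cast
  ring

lemma continuous_ftrans {g : EuclideanSpace ℝ (Fin d) → ℂ} (hg : Integrable g) :
    Continuous (ftrans g) := by
  have h𝓕 : Continuous (𝓕 g) :=
    VectorFourier.fourierIntegral_continuous Real.continuous_fourierChar
      (by exact continuous_inner) hg
  have hc : Continuous fun ω : EuclideanSpace ℝ (Fin d) => (2 * π)⁻¹ • ω :=
    continuous_const_smul _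
  have : Continuous fun ω : EuclideanSpace ℝ (Fin d) =>
      (((2 * π) ^ (-(d : ℝ) / 2) : ℝ) : ℂ) * 𝓕 g ((2 * π)⁻¹ • ω) :=
    continuous_const.mul (h𝓕.comp hc)
  convert this using 2 with ω
  exact ftrans_eq_fourierIntegral g ω

end Stmt10Aux

namespace Stmt10Aux
variable {d : ℕ}
local notation "V" => EuclideanSpace ℝ (Fin d)

lemma norm_ftrans_le {g : V → ℂ} (hg : Integrable g) (ω : V) :
    ‖ftrans g ω‖ ≤ (2 * π) ^ (-(d : ℝ) / 2) * ∫ x, ‖g x‖ := by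
  rw [ftrans, norm_mul]
  have h0 : (0:ℝ) ≤ (2 * π) ^ (-(d : ℝ) / 2) := by positivity
  have h1 : ‖(((2 * π) ^ (-(d : ℝ) / 2) : ℝ) : ℂ)‖ = (2 * π) ^ (-(d : ℝ) / 2) := by
    rw [Complex.norm_real, Real.norm_eq_abs, _root_.abs_of_nonneg h0]
  rw [h1]
  refine mul_le_mul_of_nonneg_left ?_ h0
  refine (norm_integral_le_integral_norm _).trans ?_
  refine le_of_eq (integral_congr_ae (Eventually.of_forall fun x => ?_))
  show ‖_ * _‖ = _
  rw [norm_mul]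
  have : ‖Complex.exp (-(Complex.I * ((⟪x, ω⟫ : ℝ) : ℂ)))‖ = 1 := by
    rw [Complex.norm_exp]
    simp
  rw [this, one_mul]

lemma conj_ftrans {g : V → ℂ} (ω : V) :
    (starRingEnd ℂ) (ftrans g ω) = (((2 * π) ^ (-(d : ℝ) / 2) : ℝ) : ℂ) *
      ∫ y, Complex.exp (Complex.I * ((⟪y, ω⟫ : ℝ) : ℂ)) * (starRingEnd ℂ) (g y) := by
  rw [ftrans, map_mul, ← integral_conj]
  congr 1
  · simp
  refine integral_congr_ae (Eventually.of_forall fun y => ?_)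
  show (starRingEnd ℂ) (_ * _) = _
  rw [map_mul, ← Complex.exp_conj]
  congr 2
  simp

end Stmt10Aux

namespace Stmt10Aux
variable {d : ℕ}
local notation "V" => EuclideanSpace ℝ (Fin d)

lemma re_exponent (t a b : ℝ) : (-(t:ℂ) * (a:ℂ)^2 + (-Complex.I) * (b:ℂ)).re = -t * a^2 := by
  have h : (-(t:ℂ) * (a:ℂ)^2 + (-Complex.I) * (b:ℂ)) = ((-t*a^2 : ℝ) : ℂ) + ((-b : ℝ) : ℂ) * Complex.I := by
    push_cast; ring
  rw [h, Complex.add_re, Complex.ofReal_re, Complex.mul_re, Complex.ofReal_re, Complex.ofReal_im,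
    Complex.I_re, Complex.I_im]
  ring

lemma integrable_gauss (t : ℝ) (ht : 0 < t) :
    Integrable (fun ω : V => rexp (-t * ‖ω‖^2)) := by
  have h := (GaussianFourier.integrable_cexp_neg_mul_sq_norm_add
    (b := (t:ℂ)) (by simpa using ht) 0 (0 : EuclideanSpace ℝ (Fin d))).norm
  refine h.congr (Eventually.of_forall fun v => ?_)
  show ‖_‖ = _
  rw [Complex.norm_exp]
  congr 1
  have h : (-(t:ℂ) * (‖v‖:ℂ)^2 + 0 * (⟪(0 : EuclideanSpace ℝ (Fin d)), v⟫ : ℝ)) = ((-t*‖v‖^2 : ℝ) : ℂ) := by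
    push_cast; ring
  rw [h, Complex.ofReal_re]

set_option maxHeartbeats 2000000 in
lemma gauss_bound {g : V → ℂ} (hg : Integrable g) (hg2 : MemLp g 2) (t : ℝ) (ht : 0 < t) :
    ∫⁻ ω, (‖ftrans g ω‖₊ : ℝ≥0∞)^2 * ENNReal.ofReal (rexp (-t * ‖ω‖^2))
      ≤ ∫⁻ x, (‖g x‖₊ : ℝ≥0∞)^2 := by
  set c0 : ℝ := (2 * π) ^ (-(d : ℝ) / 2) with hc0def
  have hc0 : 0 < c0 := by positivity
  set S : ℝ≥0∞ := ∫⁻ x, (‖g x‖₊ : ℝ≥0∞)^2 with hSdef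
  by_cases hS : S = ⊤
  · rw [hS]; exact le_top
  set Cr : ℝ := (π / t) ^ ((d : ℝ) / 2) with hCrdef
  have hCr : 0 < Cr := by positivity
  set Gt : ℝ := (π / (4 * t)⁻¹) ^ ((d : ℝ) / 2) with hGtdef
  have hGt : 0 < Gt := by positivity
  -- the Gaussian with the dual width
  have hgauss4 : Integrable (fun u : V => rexp (-(4 * t)⁻¹ * ‖u‖^2)) :=
    integrable_gauss _ (by positivity)
  have hGtval : (∫ u : V, rexp (-(4 * t)⁻¹ * ‖u‖^2)) = Gt := by
    rw [GaussianFourier.integral_rexp_neg_mul_sq_norm (by positivity)]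
    rw [finrank_euclideanSpace_fin]
  -- inner Gaussian integral
  have hinner : ∀ u : V, (∫ ω : V, Complex.exp (-(t:ℂ) * (‖ω‖:ℂ)^2 + (-Complex.I) * (⟪u, ω⟫ : ℝ))) =
      ((Cr : ℝ) : ℂ) * ((rexp (-(4 * t)⁻¹ * ‖u‖^2) : ℝ) : ℂ) := by
    intro u
    rw [GaussianFourier.integral_cexp_neg_mul_sq_norm_add (by simpa using ht) (-Complex.I) u]
    have ht' : (t:ℂ) ≠ 0 := by exact_mod_cast ht.ne'
    congr 1
    · rw [finrank_euclideanSpace_fin, Complex.ofReal_cpow (by positivity)]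
      push_cast
      norm_num
    · rw [Complex.ofReal_exp]
      congr 1
      have hI : ((-Complex.I))^2 = -1 := by rw [neg_sq, Complex.I_sq]
      rw [hI]
      push_cast
      field_simp
  -- the complex quantity J
  set f : V → ℝ := fun ω => rexp (-t * ‖ω‖^2) * ‖ftrans g ω‖^2 with hfdef
  have hf0 : ∀ ω, 0 ≤ f ω := fun ω => by positivity
  have hfc : Continuous f := by
    have := continuous_ftrans hg
    continuity
  have hfi : Integrable f := by
    have hM : Integrable (fun ω : V => (c0 * ∫ x, ‖g x‖)^2 * rexp (-t * ‖ω‖^2)) :=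
      (integrable_gauss t ht).const_mul _
    refine hM.mono' hfc.aestronglyMeasurable (Eventually.of_forall fun ω => ?_)
    rw [Real.norm_eq_abs, _root_.abs_of_nonneg (hf0 ω)]
    show rexp (-t * ‖ω‖^2) * ‖ftrans g ω‖^2 ≤ _
    have h1 : ‖ftrans g ω‖^2 ≤ (c0 * ∫ x, ‖g x‖)^2 := by
      have h3 := norm_ftrans_le hg ω
      have h2 : (0:ℝ) ≤ ‖ftrans g ω‖ := norm_nonneg _
      nlinarith
    calc rexp (-t*‖ω‖^2) * ‖ftrans g ω‖^2 ≤ rexp (-t*‖ω‖^2) * (c0*∫ x, ‖g x‖)^2 :=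
          mul_le_mul_of_nonneg_left h1 (Real.exp_nonneg _)
      _ = _ := by ring
  -- J as an iterated integral
  set K : V × V → ℂ := fun p => ((Cr : ℝ) : ℂ) * ((rexp (-(4 * t)⁻¹ * ‖p.1 - p.2‖^2) : ℝ) : ℂ)
      * (g p.1 * (starRingEnd ℂ) (g p.2)) with hKdef
  set Fc : V → V × V → ℂ := fun ω p =>
      Complex.exp (-(t:ℂ) * (‖ω‖:ℂ)^2 + (-Complex.I) * ((⟪p.1 - p.2, ω⟫ : ℝ) : ℂ))
        * (g p.1 * (starRingEnd ℂ) (g p.2)) with hFc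
  have hgN0 : Integrable (fun p : V × V => ‖g p.1‖ * ‖g p.2‖) := by
    rw [Measure.volume_eq_prod]; exact hg.norm.mul_prod hg.norm
  have hgaussN : Integrable (fun q : V × (V × V) => rexp (-t * ‖q.1‖^2) * (‖g q.2.1‖ * ‖g q.2.2‖))
      (volume.prod volume) :=
    (integrable_gauss t ht).mul_prod hgN0
  have hgm1 : AEStronglyMeasurable (fun p : V × V => g p.1) volume := by
    rw [Measure.volume_eq_prod]; exact hg.aestronglyMeasurable.comp_fst
  have hgm2 : AEStronglyMeasurable (fun p : V × V => g p.2) volume := by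
    rw [Measure.volume_eq_prod]; exact hg.aestronglyMeasurable.comp_snd
  have hmeas : AEStronglyMeasurable (fun q : V × (V × V) => Fc q.1 q.2)
      (volume.prod volume) := by
    simp only [hFc]
    apply AEStronglyMeasurable.mul
    · apply Continuous.aestronglyMeasurable
      apply Complex.continuous_exp.comp
      apply Continuous.add
      · exact continuous_const.mul
          ((Complex.continuous_ofReal.comp (continuous_norm.comp continuous_fst)).pow 2)
      · exact continuous_const.mul (Complex.continuous_ofReal.comp (continuous_inner.comp
          (((continuous_fst.comp continuous_snd).sub
            (continuous_snd.comp continuous_snd)).prodMk continuous_fst)))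
    · exact hgm1.comp_snd.mul (Complex.continuous_conj.comp_aestronglyMeasurable hgm2.comp_snd)
  have hFi : Integrable (fun q : V × (V × V) => Fc q.1 q.2)
      (volume.prod volume) := by
    refine hgaussN.mono' hmeas (Eventually.of_forall fun q => ?_)
    simp only [hFc]
    rw [norm_mul, Complex.norm_exp, re_exponent]
    simp [norm_mul, Real.norm_eq_abs, _root_.abs_of_nonneg (Real.exp_nonneg _)]
  have hint : ∀ ω, ((f ω : ℝ) : ℂ)
      = Complex.exp (-(t:ℂ) * (‖ω‖:ℂ)^2) * (ftrans g ω * (starRingEnd ℂ) (ftrans g ω)) := by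
    intro ω
    rw [Complex.mul_conj, hfdef]
    have h1 : Complex.exp (-(t:ℂ) * (‖ω‖:ℂ)^2) = ((rexp (-t * ‖ω‖^2) : ℝ) : ℂ) := by
      rw [Complex.ofReal_exp]; congr 1; push_cast; ring
    rw [h1, Complex.normSq_eq_norm_sq]
    push_cast
    ring
  have hAB : ∀ ω, ftrans g ω * (starRingEnd ℂ) (ftrans g ω)
      = ((c0^2 : ℝ) : ℂ) * ∫ p : V × V,
          (Complex.exp (-(Complex.I * ((⟪p.1, ω⟫ : ℝ) : ℂ))) * g p.1) *
          (Complex.exp (Complex.I * ((⟪p.2, ω⟫ : ℝ) : ℂ)) * (starRingEnd ℂ) (g p.2)) := by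
    intro ω
    rw [conj_ftrans, ftrans, Measure.volume_eq_prod,
      integral_prod_mul (fun x => Complex.exp (-(Complex.I * ((⟪x, ω⟫ : ℝ) : ℂ))) * g x)
        (fun y => Complex.exp (Complex.I * ((⟪y, ω⟫ : ℝ) : ℂ)) * (starRingEnd ℂ) (g y))]
    push_cast
    ring
  have hptw : ∀ ω, Complex.exp (-(t:ℂ) * (‖ω‖:ℂ)^2) * (ftrans g ω * (starRingEnd ℂ) (ftrans g ω))
      = ((c0^2 : ℝ) : ℂ) * ∫ p : V × V, Fc ω p := by
    intro ω
    rw [hAB ω, mul_left_comm]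
    congr 1
    rw [← integral_const_mul]
    refine integral_congr_ae (Eventually.of_forall fun p => ?_)
    show Complex.exp _ * _ = Complex.exp _ * _
    have hsub : ((⟪p.1 - p.2, ω⟫ : ℝ) : ℂ) = ((⟪p.1, ω⟫ : ℝ) : ℂ) - ((⟪p.2, ω⟫ : ℝ) : ℂ) := by
      rw [inner_sub_left]; push_cast; ring
    rw [hsub]
    have hexp : Complex.exp (-(t:ℂ) * (‖ω‖:ℂ)^2
          + (-Complex.I) * (((⟪p.1, ω⟫ : ℝ) : ℂ) - ((⟪p.2, ω⟫ : ℝ) : ℂ)))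
        = Complex.exp (-(t:ℂ) * (‖ω‖:ℂ)^2) * (Complex.exp (-(Complex.I * ((⟪p.1, ω⟫ : ℝ) : ℂ)))
            * Complex.exp (Complex.I * ((⟪p.2, ω⟫ : ℝ) : ℂ))) := by
      rw [← Complex.exp_add, ← Complex.exp_add]
      congr 1
      ring
    rw [hexp]
    ring
  have hK : ∀ p : V × V, (∫ ω, Fc ω p) = K p := by
    intro p
    simp only [hFc]
    rw [integral_mul_const, hinner (p.1 - p.2)]
  have hJ : ((∫ ω, f ω : ℝ) : ℂ) = ((c0^2 : ℝ) : ℂ) * ∫ p : V × V, K p := by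
    calc ((∫ ω, f ω : ℝ) : ℂ) = ∫ ω, ((f ω : ℝ) : ℂ) := integral_ofReal.symm
    _ = ∫ ω, ((c0^2 : ℝ) : ℂ) * ∫ p : V × V, Fc ω p := by
        refine integral_congr_ae (Eventually.of_forall fun ω => ?_)
        show ((f ω : ℝ) : ℂ) = ((c0^2 : ℝ) : ℂ) * ∫ p : V × V, Fc ω p
        rw [hint ω, hptw ω]
    _ = ((c0^2 : ℝ) : ℂ) * ∫ ω, ∫ p : V × V, Fc ω p := integral_const_mul _ _
    _ = ((c0^2 : ℝ) : ℂ) * ∫ p : V × V, ∫ ω, Fc ω p := by rw [integral_integral_swap hFi]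
    _ = ((c0^2 : ℝ) : ℂ) * ∫ p : V × V, K p := by
        congr 1
        exact integral_congr_ae (Eventually.of_forall fun p => hK p)
  -- bound the lintegral of ‖K‖
  have hKnorm : ∀ p : V × V, ENNReal.ofReal ‖K p‖ =
      ENNReal.ofReal Cr * (ENNReal.ofReal (rexp (-(4 * t)⁻¹ * ‖p.1 - p.2‖^2)) *
        ((‖g p.1‖₊ : ℝ≥0∞) * (‖g p.2‖₊ : ℝ≥0∞))) := by
    intro p
    simp only [hKdef]
    rw [norm_mul, norm_mul, norm_mul, RCLike.norm_conj]
    simp only [Complex.norm_real, Real.norm_eq_abs, _root_.abs_of_nonneg hCr.le,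
      _root_.abs_of_nonneg (Real.exp_nonneg _)]
    rw [ENNReal.ofReal_mul (by positivity), ENNReal.ofReal_mul hCr.le,
      ENNReal.ofReal_mul (norm_nonneg _), ofReal_norm, ofReal_norm, enorm_eq_nnnorm, enorm_eq_nnnorm]
    ring
  have hL : (∫⁻ p : V × V, ENNReal.ofReal ‖K p‖) ≤ ENNReal.ofReal Cr * (ENNReal.ofReal Gt * S) := by
    set E : V × V → ℝ≥0∞ := fun p => ENNReal.ofReal (rexp (-(4 * t)⁻¹ * ‖p.1 - p.2‖^2)) with hEdef
    have hEcont : Continuous E := by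
      apply ENNReal.continuous_ofReal.comp
      exact Real.continuous_exp.comp
        (continuous_const.mul ((continuous_fst.sub continuous_snd).norm.pow 2))
    have hgauss4' : 0 ≤ᶠ[ae (volume : Measure (EuclideanSpace ℝ (Fin d)))]
        fun u : V => rexp (-(4 * t)⁻¹ * ‖u‖^2) :=
      Eventually.of_forall fun u => Real.exp_nonneg _
    have hEy : ∀ x : V, (∫⁻ y, ENNReal.ofReal (rexp (-(4 * t)⁻¹ * ‖x - y‖^2))) =
        ENNReal.ofReal Gt := by
      intro x
      have h1 : (∫⁻ y, ENNReal.ofReal (rexp (-(4 * t)⁻¹ * ‖x - y‖^2)))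
          = ∫⁻ y, (fun u : V => ENNReal.ofReal (rexp (-(4 * t)⁻¹ * ‖u‖^2))) (y - x) := by
        refine lintegral_congr fun y => ?_
        rw [norm_sub_rev]
      rw [h1, lintegral_sub_right_eq_self (fun u : V => ENNReal.ofReal (rexp (-(4 * t)⁻¹ * ‖u‖^2))) x,
        ← ofReal_integral_eq_lintegral_ofReal hgauss4 hgauss4', hGtval]
    have hEx : ∀ y : V, (∫⁻ x, ENNReal.ofReal (rexp (-(4 * t)⁻¹ * ‖x - y‖^2))) =
        ENNReal.ofReal Gt := by
      intro y
      rw [lintegral_sub_right_eq_self (fun u : V => ENNReal.ofReal (rexp (-(4 * t)⁻¹ * ‖u‖^2))) y,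
        ← ofReal_integral_eq_lintegral_ofReal hgauss4 hgauss4', hGtval]
    have ha1 : AEMeasurable (fun p : V × V => (‖g p.1‖₊ : ℝ≥0∞)^2) (volume.prod volume) :=
      (hg.aestronglyMeasurable.comp_fst.enorm).pow_const 2
    have ha2 : AEMeasurable (fun p : V × V => (‖g p.2‖₊ : ℝ≥0∞)^2) (volume.prod volume) :=
      (hg.aestronglyMeasurable.comp_snd.enorm).pow_const 2
    have hfin1 : ∀ x : V, ((‖g x‖₊ : ℝ≥0∞))^2 ≠ ⊤ := fun x => ENNReal.pow_ne_top coe_ne_top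
    have hT1 : (∫⁻ p : V × V, E p * (‖g p.1‖₊ : ℝ≥0∞)^2) = ENNReal.ofReal Gt * S := by
      rw [Measure.volume_eq_prod, lintegral_prod (fun p : V × V => E p * (‖g p.1‖₊ : ℝ≥0∞)^2)
        (hEcont.measurable.aemeasurable.mul ha1)]
      have hx : ∀ x : V, (∫⁻ y, E (x, y) * (‖g x‖₊ : ℝ≥0∞)^2)
          = ENNReal.ofReal Gt * (‖g x‖₊ : ℝ≥0∞)^2 := by
        intro x
        rw [lintegral_mul_const' _ _ (hfin1 x), hEy x]
      calc (∫⁻ x, ∫⁻ y, E (x, y) * (‖g x‖₊ : ℝ≥0∞)^2)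
          = ∫⁻ x, ENNReal.ofReal Gt * (‖g x‖₊ : ℝ≥0∞)^2 := lintegral_congr hx
        _ = ENNReal.ofReal Gt * S := lintegral_const_mul' _ _ ofReal_ne_top
    have hT2 : (∫⁻ p : V × V, E p * (‖g p.2‖₊ : ℝ≥0∞)^2) = ENNReal.ofReal Gt * S := by
      rw [Measure.volume_eq_prod, lintegral_prod_symm (fun p : V × V => E p * (‖g p.2‖₊ : ℝ≥0∞)^2)
        (hEcont.measurable.aemeasurable.mul ha2)]
      have hy : ∀ y : V, (∫⁻ x, E (x, y) * (‖g y‖₊ : ℝ≥0∞)^2)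
          = ENNReal.ofReal Gt * (‖g y‖₊ : ℝ≥0∞)^2 := by
        intro y
        rw [lintegral_mul_const' _ _ (hfin1 y), hEx y]
      calc (∫⁻ y, ∫⁻ x, E (x, y) * (‖g y‖₊ : ℝ≥0∞)^2)
          = ∫⁻ y, ENNReal.ofReal Gt * (‖g y‖₊ : ℝ≥0∞)^2 := lintegral_congr hy
        _ = ENNReal.ofReal Gt * S := lintegral_const_mul' _ _ ofReal_ne_top
    have hnn : ∀ (n1 n2 : ℝ≥0), (2:ℝ≥0∞) * ((n1 : ℝ≥0∞) * (n2 : ℝ≥0∞))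
        ≤ (n1 : ℝ≥0∞)^2 + (n2 : ℝ≥0∞)^2 := by
      intro n1 n2
      have h : 2 * (n1 * n2) ≤ n1^2 + n2^2 := by
        rw [← NNReal.coe_le_coe]
        push_cast
        nlinarith [sq_nonneg ((n1:ℝ) - (n2:ℝ))]
      exact_mod_cast h
    have hmain : (∫⁻ p : V × V, E p * ((‖g p.1‖₊ : ℝ≥0∞) * (‖g p.2‖₊ : ℝ≥0∞)))
        ≤ ENNReal.ofReal Gt * S := by
      have h2 : 2 * (∫⁻ p : V × V, E p * ((‖g p.1‖₊ : ℝ≥0∞) * (‖g p.2‖₊ : ℝ≥0∞)))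
          ≤ 2 * (ENNReal.ofReal Gt * S) := by
        calc 2 * (∫⁻ p : V × V, E p * ((‖g p.1‖₊ : ℝ≥0∞) * (‖g p.2‖₊ : ℝ≥0∞)))
            = ∫⁻ p : V × V, 2 * (E p * ((‖g p.1‖₊ : ℝ≥0∞) * (‖g p.2‖₊ : ℝ≥0∞))) :=
              (lintegral_const_mul' 2 _ (by norm_num)).symm
          _ ≤ ∫⁻ p : V × V, E p * (‖g p.1‖₊ : ℝ≥0∞)^2 + E p * (‖g p.2‖₊ : ℝ≥0∞)^2 := by
              refine lintegral_mono fun p => ?_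
              rw [← mul_add, mul_left_comm]
              exact mul_le_mul_right (hnn _ _) (E p)
          _ = (∫⁻ p : V × V, E p * (‖g p.1‖₊ : ℝ≥0∞)^2)
              + ∫⁻ p : V × V, E p * (‖g p.2‖₊ : ℝ≥0∞)^2 := by
              rw [Measure.volume_eq_prod]
              exact lintegral_add_left'
                (hEcont.measurable.aemeasurable.mul ha1) _
          _ = 2 * (ENNReal.ofReal Gt * S) := by rw [hT1, hT2, two_mul]
      exact (ENNReal.mul_le_mul_iff_right (by norm_num) (by norm_num)).mp h2
    calc (∫⁻ p : V × V, ENNReal.ofReal ‖K p‖)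
        = ∫⁻ p : V × V, ENNReal.ofReal Cr * (E p * ((‖g p.1‖₊ : ℝ≥0∞) * (‖g p.2‖₊ : ℝ≥0∞))) := by
          refine lintegral_congr fun p => ?_
          rw [hKnorm p]
      _ = ENNReal.ofReal Cr * ∫⁻ p : V × V, E p * ((‖g p.1‖₊ : ℝ≥0∞) * (‖g p.2‖₊ : ℝ≥0∞)) :=
          lintegral_const_mul' _ _ ofReal_ne_top
      _ ≤ ENNReal.ofReal Cr * (ENNReal.ofReal Gt * S) := mul_le_mul_right hmain _
  -- conclude
  have hfin : (∫ ω, f ω) ≤ c0^2 * (Cr * (Gt * S.toReal)) := by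
    have h1 : (∫ ω, f ω) ≤ |∫ ω, f ω| := le_abs_self _
    have h2 : |∫ ω, f ω| = ‖((∫ ω, f ω : ℝ) : ℂ)‖ := by
      rw [Complex.norm_real, Real.norm_eq_abs]
    have h3 : ‖((∫ ω, f ω : ℝ) : ℂ)‖ = c0^2 * ‖∫ p : V × V, K p‖ := by
      rw [hJ, norm_mul, Complex.norm_real, Real.norm_eq_abs, _root_.abs_of_nonneg (by positivity)]
    have h4 : ‖∫ p : V × V, K p‖ ≤ (∫⁻ p : V × V, ENNReal.ofReal ‖K p‖).toReal :=
      norm_integral_le_lintegral_norm K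
    have hne : ENNReal.ofReal Cr * (ENNReal.ofReal Gt * S) ≠ ⊤ :=
      ENNReal.mul_ne_top ofReal_ne_top (ENNReal.mul_ne_top ofReal_ne_top hS)
    have h5 : (∫⁻ p : V × V, ENNReal.ofReal ‖K p‖).toReal
        ≤ (ENNReal.ofReal Cr * (ENNReal.ofReal Gt * S)).toReal :=
      ENNReal.toReal_mono hne hL
    have h6 : (ENNReal.ofReal Cr * (ENNReal.ofReal Gt * S)).toReal = Cr * (Gt * S.toReal) := by
      rw [ENNReal.toReal_mul, ENNReal.toReal_mul, ENNReal.toReal_ofReal hCr.le,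
        ENNReal.toReal_ofReal hGt.le]
    calc (∫ ω, f ω) ≤ ‖((∫ ω, f ω : ℝ) : ℂ)‖ := h2 ▸ h1
      _ = c0^2 * ‖∫ p : V × V, K p‖ := h3
      _ ≤ c0^2 * (∫⁻ p : V × V, ENNReal.ofReal ‖K p‖).toReal :=
          mul_le_mul_of_nonneg_left h4 (by positivity)
      _ ≤ c0^2 * (Cr * (Gt * S.toReal)) := by
          refine mul_le_mul_of_nonneg_left ?_ (by positivity)
          rw [← h6]
          exact h5
  have hconst : c0^2 * (Cr * Gt) = 1 := by
    have hπ : (0:ℝ) < 2 * π := by positivity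
    have h1 : c0^2 = (2*π) ^ (-(d:ℝ)) := by
      rw [hc0def, ← Real.rpow_natCast ((2*π) ^ (-(d:ℝ)/2)) 2, ← Real.rpow_mul hπ.le]
      congr 1
      push_cast
      ring
    have hbase : (π/t) * (π/(4*t)⁻¹) = (2*π)^(2:ℕ) := by
      field_simp
      ring
    have h2 : Cr * Gt = (2*π) ^ ((d:ℝ)) := by
      rw [hCrdef, hGtdef, ← Real.mul_rpow (by positivity) (by positivity), hbase,
        ← Real.rpow_natCast (2*π) 2, ← Real.rpow_mul hπ.le]
      congr 1
      push_cast
      ring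
    rw [h1, h2, ← Real.rpow_add hπ]
    norm_num
  have hfin2 : (∫ ω, f ω) ≤ S.toReal := by
    calc (∫ ω, f ω) ≤ c0^2 * (Cr * (Gt * S.toReal)) := hfin
    _ = (c0^2 * (Cr * Gt)) * S.toReal := by ring
    _ = S.toReal := by rw [hconst, one_mul]
  have hLHS : (∫⁻ ω, (‖ftrans g ω‖₊ : ℝ≥0∞)^2 * ENNReal.ofReal (rexp (-t * ‖ω‖^2)))
      = ENNReal.ofReal (∫ ω, f ω) := by
    rw [ofReal_integral_eq_lintegral_ofReal hfi (Eventually.of_forall hf0)]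
    refine lintegral_congr fun ω => ?_
    rw [hfdef]
    rw [ENNReal.ofReal_mul (by positivity), mul_comm]
    congr 1
    rw [← enorm_eq_nnnorm, ← ofReal_norm, ← ENNReal.ofReal_pow (norm_nonneg _)]
  rw [hLHS]
  calc ENNReal.ofReal (∫ ω, f ω) ≤ ENNReal.ofReal S.toReal := ENNReal.ofReal_le_ofReal hfin2
  _ = S := ENNReal.ofReal_toReal hS

end Stmt10Aux

namespace Stmt10Aux
variable {d : ℕ}
local notation "V" => EuclideanSpace ℝ (Fin d)

lemma sq_eLpNorm (g : V → ℂ) :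
    (eLpNorm g 2 volume)^2 = ∫⁻ x, (‖g x‖₊ : ℝ≥0∞)^2 := by
  rw [eLpNorm_eq_lintegral_rpow_enorm_toReal (by norm_num) (by norm_num)]; simp only [enorm_eq_nnnorm]
  have h2 : ((2:ℝ≥0∞)).toReal = (2:ℝ) := by norm_num
  have hX : ∀ x : V, (‖g x‖₊ : ℝ≥0∞) ^ (2:ℝ) = (‖g x‖₊ : ℝ≥0∞)^(2:ℕ) := fun x => by
    rw [← ENNReal.rpow_natCast]; norm_num
  rw [h2, lintegral_congr hX, ← ENNReal.rpow_natCast _ 2, ← ENNReal.rpow_mul]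
  norm_num

lemma plancherel_le {g : V → ℂ} (hg : Integrable g) (hg2 : MemLp g 2) :
    ∫⁻ ω, (‖ftrans g ω‖₊ : ℝ≥0∞)^2 ≤ ∫⁻ x, (‖g x‖₊ : ℝ≥0∞)^2 := by
  set F : V → ℝ≥0∞ := fun ω => (‖ftrans g ω‖₊ : ℝ≥0∞)^2 with hF
  have hFm : Measurable F :=
    (((continuous_ftrans hg).measurable.nnnorm).coe_nnreal_ennreal).pow_const 2
  set fn : ℕ → V → ℝ≥0∞ :=
    fun n ω => F ω * ENNReal.ofReal (rexp (-(1/(n+1)) * ‖ω‖^2)) with hfn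
  have hfnm : ∀ n, Measurable (fn n) := by
    intro n
    apply hFm.mul
    exact (ENNReal.continuous_ofReal.comp (Real.continuous_exp.comp
      (continuous_const.mul (continuous_norm.pow 2)))).measurable
  have htend : ∀ ω, Tendsto (fun n => fn n ω) atTop (𝓝 (F ω)) := by
    intro ω
    have h1 : Tendsto (fun n : ℕ => (1:ℝ)/(n+1)) atTop (𝓝 0) :=
      tendsto_one_div_add_atTop_nhds_zero_nat
    have h2 : Tendsto (fun n : ℕ => -(1/((n:ℝ)+1)) * ‖ω‖^2) atTop (𝓝 (-(0:ℝ) * ‖ω‖^2)) :=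
      (h1.neg).mul_const _
    have h3 : Tendsto (fun n : ℕ => ENNReal.ofReal (rexp (-(1/((n:ℝ)+1)) * ‖ω‖^2))) atTop
        (𝓝 (ENNReal.ofReal (rexp (-(0:ℝ) * ‖ω‖^2)))) :=
      (ENNReal.continuous_ofReal.tendsto _).comp ((Real.continuous_exp.tendsto _).comp h2)
    have h4 : ENNReal.ofReal (rexp (-(0:ℝ) * ‖ω‖^2)) = 1 := by
      norm_num
    rw [h4] at h3
    have h5 := ENNReal.Tendsto.const_mul h3 (Or.inl one_ne_zero) (a := F ω)
    rw [mul_one] at h5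
    exact h5
  have hlim : ∀ ω, F ω = Filter.liminf (fun n => fn n ω) Filter.atTop :=
    fun ω => (htend ω).liminf_eq.symm
  calc ∫⁻ ω, F ω = ∫⁻ ω, Filter.liminf (fun n => fn n ω) Filter.atTop := lintegral_congr hlim
    _ ≤ Filter.liminf (fun n => ∫⁻ ω, fn n ω) Filter.atTop := lintegral_liminf_le hfnm
    _ ≤ Filter.liminf (fun _ : ℕ => ∫⁻ x, (‖g x‖₊ : ℝ≥0∞)^2) Filter.atTop := by
        refine Filter.liminf_le_liminf (Eventually.of_forall fun n => ?_)
        exact gauss_bound hg hg2 (1/(n+1)) (by positivity)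
    _ = ∫⁻ x, (‖g x‖₊ : ℝ≥0∞)^2 := Filter.liminf_const _

end Stmt10Aux

namespace Stmt10Aux

lemma key_real (σ δ s : ℝ) (hσ : 0 < σ) (hδ : 0 < δ) (hδ1 : δ ≤ 1) (hs : 0 ≤ s) :
    (1 + δ^2 * s) ^ σ ≤ 2^σ * (1 + δ^(2*σ) * (1+s)^σ) := by
  have h1s : (0:ℝ) < 1 + s := by linarith
  have hbase : (0:ℝ) ≤ 1 + δ^2*s := by positivity
  rcases le_or_gt (δ^2 * (1+s)) 1 with h|h
  · have h2 : 1 + δ^2*s ≤ 2 := by nlinarith [sq_nonneg δ]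
    calc (1 + δ^2*s)^σ ≤ 2^σ := Real.rpow_le_rpow hbase h2 hσ.le
      _ ≤ 2^σ * (1 + δ^(2*σ)*(1+s)^σ) := by
          refine le_mul_of_one_le_right (by positivity) ?_
          have h3 : (0:ℝ) ≤ δ^(2*σ)*(1+s)^σ := by positivity
          linarith
  · have h2 : 1 + δ^2*s ≤ 2 * (δ^2*(1+s)) := by nlinarith
    calc (1 + δ^2*s)^σ ≤ (2*(δ^2*(1+s)))^σ := Real.rpow_le_rpow hbase h2 hσ.le
      _ = 2^σ * ((δ^2)^σ * (1+s)^σ) := by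
          rw [Real.mul_rpow (by norm_num) (by positivity),
            Real.mul_rpow (by positivity) h1s.le]
      _ = 2^σ * (δ^(2*σ) * (1+s)^σ) := by
          rw [← Real.rpow_natCast δ 2, ← Real.rpow_mul hδ.le]
          norm_num
      _ ≤ 2^σ * (1 + δ^(2*σ)*(1+s)^σ) := by
          refine mul_le_mul_of_nonneg_left ?_ (by positivity)
          have h3 : (0:ℝ) ≤ δ^(2*σ)*(1+s)^σ := by positivity
          linarith

end Stmt10Aux


open Stmt10Aux in
theorem stmt10 (d : ℕ) (hd : 1 ≤ d) (σ : ℝ) (hσ : (d : ℝ) / 2 < σ)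
    (c₁ c₂ : ℝ) (hc₁ : 0 < c₁) (hc₁₂ : c₁ ≤ c₂)
    (Φ : EuclideanSpace ℝ (Fin d) → ℝ) (hΦc : Continuous Φ)
    (hΦi : Integrable (fun x => (Φ x : ℂ)))
    (Φhat : EuclideanSpace ℝ (Fin d) → ℝ)
    (hΦhat : ∀ ω, ftrans (fun x => (Φ x : ℂ)) ω = ((Φhat ω : ℝ) : ℂ))
    (hlow : ∀ ω, c₁ * (1 + ‖ω‖ ^ 2) ^ (-σ) ≤ Φhat ω)
    (hup : ∀ ω, Φhat ω ≤ c₂ * (1 + ‖ω‖ ^ 2) ^ (-σ)) :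
    ∀ δ : ℝ, 0 < δ → δ ≤ 1 →
      ∀ g : EuclideanSpace ℝ (Fin d) → ℂ, Integrable g → MemLp g 2 →
        (∫⁻ ω, (‖ftrans g ω‖₊ : ℝ≥0∞) ^ 2 / ENNReal.ofReal (Φhat (δ • ω)))
          ≤ ENNReal.ofReal ((2 : ℝ) ^ σ / c₁) *
            ((eLpNorm g 2 volume) ^ 2 +
              ENNReal.ofReal (δ ^ (2 * σ)) *
                ∫⁻ ω, (‖ftrans g ω‖₊ : ℝ≥0∞) ^ 2
                  * ENNReal.ofReal ((1 + ‖ω‖ ^ 2) ^ σ)) := by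
  intro δ hδ0 hδ1 g hg hg2
  have hd' : (1:ℝ) ≤ (d:ℝ) := by exact_mod_cast hd
  have hσ0 : 0 < σ := lt_of_lt_of_le (by linarith) hσ.le
  have hΦpos : ∀ ω : EuclideanSpace ℝ (Fin d), 0 < Φhat ω := fun ω =>
    lt_of_lt_of_le (by positivity) (hlow ω)
  set F : EuclideanSpace ℝ (Fin d) → ℝ≥0∞ := fun ω => (‖ftrans g ω‖₊ : ℝ≥0∞)^2 with hF
  have hFm : Measurable F :=
    (((continuous_ftrans hg).measurable.nnnorm).coe_nnreal_ennreal).pow_const 2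
  have hinv : ∀ ω : EuclideanSpace ℝ (Fin d),
      (Φhat (δ • ω))⁻¹ ≤ ((2:ℝ)^σ/c₁) * (1 + δ^(2*σ) * (1+‖ω‖^2)^σ) := by
    intro ω
    have hnorm : ‖δ • ω‖^2 = δ^2 * ‖ω‖^2 := by
      rw [norm_smul, Real.norm_eq_abs, abs_of_pos hδ0, mul_pow]
    have h0 : c₁ * (1+‖δ•ω‖^2)^(-σ) ≤ Φhat (δ•ω) := hlow _
    have hA : (Φhat (δ•ω))⁻¹ ≤ (c₁ * (1+‖δ•ω‖^2)^(-σ))⁻¹ :=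
      inv_anti₀ (by positivity) h0
    have hB : (c₁ * (1+‖δ•ω‖^2)^(-σ))⁻¹ = c₁⁻¹ * (1+‖δ•ω‖^2)^σ := by
      rw [mul_inv, ← Real.rpow_neg (by positivity), neg_neg]
    have hC : (1+‖δ•ω‖^2)^σ ≤ 2^σ * (1 + δ^(2*σ) * (1+‖ω‖^2)^σ) := by
      rw [hnorm]
      exact key_real σ δ (‖ω‖^2) hσ0 hδ0 hδ1 (by positivity)
    calc (Φhat (δ•ω))⁻¹ ≤ c₁⁻¹ * (1+‖δ•ω‖^2)^σ := by rw [← hB]; exact hA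
      _ ≤ c₁⁻¹ * (2^σ * (1 + δ^(2*σ) * (1+‖ω‖^2)^σ)) :=
          mul_le_mul_of_nonneg_left hC (by positivity)
      _ = ((2:ℝ)^σ/c₁) * (1 + δ^(2*σ) * (1+‖ω‖^2)^σ) := by ring
  have hptw : ∀ ω : EuclideanSpace ℝ (Fin d),
      F ω / ENNReal.ofReal (Φhat (δ • ω))
        ≤ ENNReal.ofReal ((2:ℝ)^σ/c₁) *
            (F ω + ENNReal.ofReal (δ^(2*σ)) * (F ω * ENNReal.ofReal ((1+‖ω‖^2)^σ))) := by
    intro ω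
    rw [div_eq_mul_inv, ← ENNReal.ofReal_inv_of_pos (hΦpos _)]
    calc F ω * ENNReal.ofReal ((Φhat (δ•ω))⁻¹)
        ≤ F ω * ENNReal.ofReal (((2:ℝ)^σ/c₁) * (1 + δ^(2*σ) * (1+‖ω‖^2)^σ)) :=
          mul_le_mul_right (ENNReal.ofReal_le_ofReal (hinv ω)) _
      _ = ENNReal.ofReal ((2:ℝ)^σ/c₁) *
            (F ω + ENNReal.ofReal (δ^(2*σ)) * (F ω * ENNReal.ofReal ((1+‖ω‖^2)^σ))) := by
          rw [ENNReal.ofReal_mul (by positivity), ENNReal.ofReal_add (by norm_num) (by positivity),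
            ENNReal.ofReal_one, ENNReal.ofReal_mul (by positivity)]
          ring
  have hplan : (∫⁻ ω, F ω) ≤ (eLpNorm g 2 volume)^2 := by
    rw [sq_eLpNorm g]
    exact plancherel_le hg hg2
  calc (∫⁻ ω, F ω / ENNReal.ofReal (Φhat (δ • ω)))
      ≤ ∫⁻ ω, ENNReal.ofReal ((2:ℝ)^σ/c₁) *
          (F ω + ENNReal.ofReal (δ^(2*σ)) * (F ω * ENNReal.ofReal ((1+‖ω‖^2)^σ))) :=
        lintegral_mono hptw
    _ = ENNReal.ofReal ((2:ℝ)^σ/c₁) *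
          ∫⁻ ω, (F ω + ENNReal.ofReal (δ^(2*σ)) * (F ω * ENNReal.ofReal ((1+‖ω‖^2)^σ))) :=
        lintegral_const_mul' _ _ ENNReal.ofReal_ne_top
    _ = ENNReal.ofReal ((2:ℝ)^σ/c₁) *
          ((∫⁻ ω, F ω) + ∫⁻ ω, ENNReal.ofReal (δ^(2*σ)) * (F ω * ENNReal.ofReal ((1+‖ω‖^2)^σ))) := by
        rw [lintegral_add_left hFm]
    _ = ENNReal.ofReal ((2:ℝ)^σ/c₁) *
          ((∫⁻ ω, F ω) + ENNReal.ofReal (δ^(2*σ)) * ∫⁻ ω, F ω * ENNReal.ofReal ((1+‖ω‖^2)^σ)) := by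
        rw [lintegral_const_mul' _ _ ENNReal.ofReal_ne_top]
    _ ≤ ENNReal.ofReal ((2:ℝ)^σ/c₁) *
          ((eLpNorm g 2 volume)^2 + ENNReal.ofReal (δ^(2*σ)) *
            ∫⁻ ω, F ω * ENNReal.ofReal ((1+‖ω‖^2)^σ)) :=
        mul_le_mul_right (add_le_add_left hplan _) _
end
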